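/- arXiv:2005.13805 — 6 statements merged into one kernel-verified Lean document; each statement's English description precedes it below -/
import Mathlib

section
/- Let K be a continuous nonnegative kernel function, symmetric about 0, with ∫_{−∞}^{∞} K(x) dx = 1 and finite first absolute moment ∫_{−∞}^{∞} |x| K(x) dx < ∞. Then ∫_{−∞}^{∞} x V(x) K(x) dx = −(1/2) ∫_{−∞}^{∞} V(x) W(x) dx. -/
open MeasureTheory Set Filter

/-- `V x = ∫_x^∞ K(z) dz`. -/
noncomputable def kerV (K : ℝ → ℝ) (x : ℝ) : ℝ := ∫ z in Set.Ioi x, K z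

/-- `W x = ∫_{-∞}^x K(z) dz`. -/
noncomputable def kerW (K : ℝ → ℝ) (x : ℝ) : ℝ := ∫ z in Set.Iic x, K z

lemma kerV_integrableOn (K : ℝ → ℝ) (hK_cont : Continuous K) (hK_nonneg : ∀ x, 0 ≤ K x)
    (hK_mom1 : Integrable (fun x => |x| * K x)) :
    IntegrableOn (kerV K) (Set.Ioi 0) := by
  set f : ℝ × ℝ → ℝ := fun p => if p.1 < p.2 then K p.2 else 0 with hf
  have hmf : AEStronglyMeasurable f (((volume : Measure ℝ).restrict (Set.Ioi 0)).prod volume) := by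
    refine (Measurable.ite (measurableSet_lt measurable_fst measurable_snd)
      (hK_cont.measurable.comp measurable_snd) measurable_const).aestronglyMeasurable
  have key : Integrable f (((volume : Measure ℝ).restrict (Set.Ioi 0)).prod volume) := by
    rw [integrable_prod_iff' hmf]
    constructor
    · filter_upwards with z
      have h2 : (fun x => f (x, z)) = Set.indicator (Set.Iio z) (fun _ => K z) := by
        ext x
        by_cases h : x < z <;> simp [f, h, Set.indicator_apply]
      rw [h2, integrable_indicator_iff measurableSet_Iio]
      refine integrableOn_const ?_
      rw [Measure.restrict_apply measurableSet_Iio, Set.Iio_inter_Ioi]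
      exact measure_Ioo_lt_top.ne
    · have heq : ∀ z : ℝ, (∫ x, ‖f (x, z)‖ ∂((volume : Measure ℝ).restrict (Set.Ioi 0))) =
          max z 0 * K z := by
        intro z
        have h1 : (fun x => ‖f (x, z)‖) = Set.indicator (Set.Iio z) (fun _ => K z) := by
          ext x
          by_cases h : x < z <;>
            simp [f, h, Set.indicator_apply, abs_of_nonneg (hK_nonneg z)]
        rw [h1, integral_indicator measurableSet_Iio,
          Measure.restrict_restrict measurableSet_Iio, Set.Iio_inter_Ioi, setIntegral_const,
          smul_eq_mul, Real.volume_real_Ioo, sub_zero]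
      have hg : Integrable (fun z : ℝ => max z 0 * K z) := by
        refine hK_mom1.mono' ((continuous_id.max continuous_const).mul hK_cont).aestronglyMeasurable ?_
        filter_upwards with z
        rw [Real.norm_eq_abs, abs_of_nonneg (mul_nonneg (le_max_right _ _) (hK_nonneg z))]
        exact mul_le_mul_of_nonneg_right (max_le (le_abs_self z) (abs_nonneg z)) (hK_nonneg z)
      exact hg.congr (Filter.Eventually.of_forall fun z => (heq z).symm)
  have h3 := key.integral_prod_left
  refine h3.congr ?_
  filter_upwards with x
  have h4 : (fun z => f (x, z)) = Set.indicator (Set.Ioi x) K := by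
    ext z; by_cases h : x < z <;> simp [f, h, Set.indicator_apply]
  rw [h4, integral_indicator measurableSet_Ioi]
  rfl

lemma kerW_integrableOn (K : ℝ → ℝ) (hK_cont : Continuous K) (hK_nonneg : ∀ x, 0 ≤ K x)
    (hK_mom1 : Integrable (fun x => |x| * K x)) :
    IntegrableOn (kerW K) (Set.Iic 0) := by
  set f : ℝ × ℝ → ℝ := fun p => if p.2 ≤ p.1 then K p.2 else 0 with hf
  have hmf : AEStronglyMeasurable f (((volume : Measure ℝ).restrict (Set.Iic 0)).prod volume) := by
    refine (Measurable.ite (measurableSet_le measurable_snd measurable_fst)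
      (hK_cont.measurable.comp measurable_snd) measurable_const).aestronglyMeasurable
  have key : Integrable f (((volume : Measure ℝ).restrict (Set.Iic 0)).prod volume) := by
    rw [integrable_prod_iff' hmf]
    constructor
    · filter_upwards with z
      have h2 : (fun x => f (x, z)) = Set.indicator (Set.Ici z) (fun _ => K z) := by
        ext x
        by_cases h : z ≤ x <;> simp [f, h, Set.indicator_apply]
      rw [h2, integrable_indicator_iff measurableSet_Ici]
      refine integrableOn_const ?_
      rw [Measure.restrict_apply measurableSet_Ici, Set.Ici_inter_Iic]
      exact measure_Icc_lt_top.ne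
    · have heq : ∀ z : ℝ, (∫ x, ‖f (x, z)‖ ∂((volume : Measure ℝ).restrict (Set.Iic 0))) =
          max (0 - z) 0 * K z := by
        intro z
        have h1 : (fun x => ‖f (x, z)‖) = Set.indicator (Set.Ici z) (fun _ => K z) := by
          ext x
          by_cases h : z ≤ x <;>
            simp [f, h, Set.indicator_apply, abs_of_nonneg (hK_nonneg z)]
        rw [h1, integral_indicator measurableSet_Ici,
          Measure.restrict_restrict measurableSet_Ici, Set.Ici_inter_Iic, setIntegral_const,
          smul_eq_mul, Real.volume_real_Icc]
      have hg : Integrable (fun z : ℝ => max (0 - z) 0 * K z) := by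
        refine hK_mom1.mono' (((continuous_const.sub continuous_id).max
          continuous_const).mul hK_cont).aestronglyMeasurable ?_
        filter_upwards with z
        rw [Real.norm_eq_abs, abs_of_nonneg (mul_nonneg (le_max_right _ _) (hK_nonneg z))]
        refine mul_le_mul_of_nonneg_right (max_le ?_ (abs_nonneg z)) (hK_nonneg z)
        rw [zero_sub]
        exact neg_le_abs z
      exact hg.congr (Filter.Eventually.of_forall fun z => (heq z).symm)
  have h3 := key.integral_prod_left
  refine h3.congr ?_
  filter_upwards with x
  have h4 : (fun z => f (x, z)) = Set.indicator (Set.Iic x) K := by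
    ext z; by_cases h : z ≤ x <;> simp [f, h, Set.indicator_apply]
  rw [h4, integral_indicator measurableSet_Iic]
  rfl

/-- If `K` is a continuous nonnegative kernel, symmetric about `0`, with `∫ K = 1`
and finite first absolute moment, then
`∫ x V(x) K(x) dx = -(1/2) ∫ V(x) W(x) dx`. -/
theorem integral_id_mul_kerV_mul_kernel
    (K : ℝ → ℝ) (hK_cont : Continuous K) (hK_nonneg : ∀ x, 0 ≤ K x)
    (hK_symm : ∀ x, K (-x) = K x) (hK_one : (∫ x, K x) = 1)
    (hK_mom1 : Integrable (fun x => |x| * K x)) :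
    (∫ x, x * kerV K x * K x) = -(1 / 2) * ∫ x, kerV K x * kerW K x := by
  -- K is integrable
  have hK_int : Integrable K := by
    have hind : Integrable (Set.indicator (Set.Icc (-1:ℝ) 1) K) :=
      (hK_cont.continuousOn.integrableOn_compact isCompact_Icc).integrable_indicator
        measurableSet_Icc
    refine (hind.add hK_mom1).mono' hK_cont.aestronglyMeasurable ?_
    filter_upwards with x
    rw [Real.norm_eq_abs, abs_of_nonneg (hK_nonneg x)]
    by_cases h : x ∈ Set.Icc (-1:ℝ) 1
    · simp only [Pi.add_apply, Set.indicator_of_mem h]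
      nlinarith [hK_nonneg x, abs_nonneg x]
    · simp only [Pi.add_apply, Set.indicator_of_notMem h]
      have : 1 ≤ |x| := by
        simp only [Set.mem_Icc, not_and_or, not_le] at h
        rcases h with h | h
        · rw [abs_of_neg (by linarith)]; linarith
        · rw [abs_of_pos (by linarith)]; linarith
      nlinarith [hK_nonneg x]
  -- derivative of W
  have hW_deriv : ∀ x, HasDerivAt (kerW K) (K x) x := by
    intro x
    have h1 : ∀ y : ℝ, kerW K y = (∫ z in Set.Iic (0:ℝ), K z) + ∫ z in (0:ℝ)..y, K z := by
      intro y
      have := intervalIntegral.integral_Iic_sub_Iic (μ := volume) (f := K) (a := (0:ℝ)) (b := y)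
        hK_int.integrableOn hK_int.integrableOn
      unfold kerW; linarith
    have h2 : HasDerivAt (fun y => ∫ z in (0:ℝ)..y, K z) (K x) x :=
      intervalIntegral.integral_hasDerivAt_right hK_int.intervalIntegrable
        hK_cont.stronglyMeasurable.stronglyMeasurableAtFilter hK_cont.continuousAt
    have h3 := h2.const_add (∫ z in Set.Iic (0:ℝ), K z)
    simpa [← h1] using h3.congr_of_eventuallyEq (Filter.Eventually.of_forall fun y => (h1 y)) 
  -- V = 1 - W
  have hVW : ∀ x, kerV K x = 1 - kerW K x := by
    intro x
    have := intervalIntegral.integral_Iic_add_Ioi (μ := volume) (b := x) hK_int.integrableOn hK_int.integrableOn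
    rw [hK_one] at this
    unfold kerV kerW at *
    linarith
  have hV_deriv : ∀ x, HasDerivAt (kerV K) (-K x) x := by
    intro x
    have := (hasDerivAt_const x (1:ℝ)).sub (hW_deriv x)
    rw [zero_sub] at this
    exact this.congr_of_eventuallyEq (Filter.Eventually.of_forall fun y => (hVW y))
  have hV_cont : Continuous (kerV K) := by
    have : Differentiable ℝ (kerV K) := fun x => (hV_deriv x).differentiableAt
    exact this.continuous
  have hW_cont : Continuous (kerW K) := by
    have : Differentiable ℝ (kerW K) := fun x => (hW_deriv x).differentiableAt
    exact this.continuous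
  -- bounds
  have hV_nonneg : ∀ x, 0 ≤ kerV K x := fun x =>
    setIntegral_nonneg measurableSet_Ioi fun z _ => hK_nonneg z
  have hW_nonneg : ∀ x, 0 ≤ kerW K x := fun x =>
    setIntegral_nonneg measurableSet_Iic fun z _ => hK_nonneg z
  have hV_le_one : ∀ x, kerV K x ≤ 1 := fun x => by
    rw [hVW x]; linarith [hW_nonneg x]
  have hW_le_one : ∀ x, kerW K x ≤ 1 := fun x => by
    have := hVW x; linarith [hV_nonneg x]
  -- symmetry : W x = V (-x)
  have hWVneg : ∀ x, kerW K x = kerV K (-x) := by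
    intro x
    unfold kerW kerV
    rw [← integral_comp_neg_Iic]
    exact setIntegral_congr_fun measurableSet_Iic fun z _ => (hK_symm z).symm
  -- integrability of x V K, x W K, x (V-W) K
  have habs : ∀ (g : ℝ → ℝ), Continuous g → (∀ x, |g x| ≤ 1) →
      Integrable (fun x => x * g x * K x) := by
    intro g hg hgb
    refine hK_mom1.mono' ((continuous_id.mul hg).mul hK_cont).aestronglyMeasurable ?_
    filter_upwards with x
    rw [Real.norm_eq_abs, abs_mul, abs_mul, abs_of_nonneg (hK_nonneg x)]
    have : |x| * |g x| ≤ |x| * 1 := mul_le_mul_of_nonneg_left (hgb x) (abs_nonneg x)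
    nlinarith [hK_nonneg x, abs_nonneg x]
  have hxVK_int : Integrable (fun x => x * kerV K x * K x) :=
    habs _ hV_cont fun x => by rw [abs_of_nonneg (hV_nonneg x)]; exact hV_le_one x
  have hxWK_int : Integrable (fun x => x * kerW K x * K x) :=
    habs _ hW_cont fun x => by rw [abs_of_nonneg (hW_nonneg x)]; exact hW_le_one x
  -- integrability of V*W
  have hVWprod_int : Integrable (fun x => kerV K x * kerW K x) := by
    have hIoi : IntegrableOn (fun x => kerV K x * kerW K x) (Set.Ioi 0) := by
      refine (kerV_integrableOn K hK_cont hK_nonneg hK_mom1).mono' 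
        (hV_cont.mul hW_cont).aestronglyMeasurable.restrict ?_
      filter_upwards with x
      rw [Real.norm_eq_abs, abs_of_nonneg (mul_nonneg (hV_nonneg x) (hW_nonneg x))]
      nlinarith [hV_nonneg x, hW_nonneg x, hW_le_one x]
    have hIic : IntegrableOn (fun x => kerV K x * kerW K x) (Set.Iic 0) := by
      refine (kerW_integrableOn K hK_cont hK_nonneg hK_mom1).mono'
        (hV_cont.mul hW_cont).aestronglyMeasurable.restrict ?_
      filter_upwards with x
      rw [Real.norm_eq_abs, abs_of_nonneg (mul_nonneg (hV_nonneg x) (hW_nonneg x))]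
      nlinarith [hV_nonneg x, hW_nonneg x, hV_le_one x]
    have := hIic.union hIoi
    rwa [Set.Iic_union_Ioi, integrableOn_univ] at this
  -- tail limits
  have htail_top : Filter.Tendsto (fun x => ∫ z in Set.Ioi x, |z| * K z)
      Filter.atTop (nhds 0) := by
    have h0 : Filter.Tendsto (fun x => ∫ z in (0:ℝ)..x, |z| * K z) Filter.atTop
        (nhds (∫ z in Set.Ioi (0:ℝ), |z| * K z)) :=
      intervalIntegral_tendsto_integral_Ioi 0 hK_mom1.integrableOn Filter.tendsto_id
    have h1 := Filter.Tendsto.sub (tendsto_const_nhds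
      (x := ∫ z in Set.Ioi (0:ℝ), |z| * K z) (f := Filter.atTop)) h0
    rw [sub_self] at h1
    refine h1.congr' ?_
    filter_upwards [Filter.eventually_ge_atTop (0:ℝ)] with x hx
    rw [intervalIntegral.integral_of_le hx]
    have hsplit : (∫ z in Set.Ioc 0 x, |z| * K z) + (∫ z in Set.Ioi x, |z| * K z)
        = ∫ z in Set.Ioi (0:ℝ), |z| * K z := by
      rw [← setIntegral_union (Set.Ioc_disjoint_Ioi le_rfl) measurableSet_Ioi
        hK_mom1.integrableOn hK_mom1.integrableOn, Set.Ioc_union_Ioi_eq_Ioi hx]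
    linarith
  have htail_bot : Filter.Tendsto (fun x => ∫ z in Set.Iic x, |z| * K z)
      Filter.atBot (nhds 0) := by
    have h0 : Filter.Tendsto (fun x => ∫ z in x..(0:ℝ), |z| * K z) Filter.atBot
        (nhds (∫ z in Set.Iic (0:ℝ), |z| * K z)) :=
      intervalIntegral_tendsto_integral_Iic 0 hK_mom1.integrableOn Filter.tendsto_id
    have h1 := Filter.Tendsto.sub (tendsto_const_nhds
      (x := ∫ z in Set.Iic (0:ℝ), |z| * K z) (f := Filter.atBot)) h0
    rw [sub_self] at h1
    refine h1.congr' ?_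
    filter_upwards [Filter.eventually_le_atBot (0:ℝ)] with x hx
    rw [intervalIntegral.integral_of_le hx]
    have hsplit : (∫ z in Set.Iic x, |z| * K z) + (∫ z in Set.Ioc x 0, |z| * K z)
        = ∫ z in Set.Iic (0:ℝ), |z| * K z := by
      rw [← setIntegral_union (Set.Iic_disjoint_Ioc le_rfl) measurableSet_Ioc
        hK_mom1.integrableOn hK_mom1.integrableOn, Set.Iic_union_Ioc_eq_Iic hx]
    linarith
  -- boundary limits of x V W
  have hbnd_top : Filter.Tendsto (fun x => x * kerV K x * kerW K x) Filter.atTop (nhds 0) := by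
    refine squeeze_zero' ?_ ?_ htail_top
    · filter_upwards [Filter.eventually_ge_atTop (0:ℝ)] with x hx
      exact mul_nonneg (mul_nonneg hx (hV_nonneg x)) (hW_nonneg x)
    · filter_upwards [Filter.eventually_ge_atTop (0:ℝ)] with x hx
      have h1 : x * kerV K x * kerW K x ≤ x * kerV K x := by
        nlinarith [mul_nonneg (mul_nonneg hx (hV_nonneg x)) (sub_nonneg.2 (hW_le_one x))]
      have h2 : x * kerV K x ≤ ∫ z in Set.Ioi x, |z| * K z := by
        unfold kerV
        rw [← integral_const_mul]
        refine setIntegral_mono_on (hK_int.integrableOn.const_mul x) hK_mom1.integrableOn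
          measurableSet_Ioi fun z hz => ?_
        have : x ≤ |z| := le_trans (le_of_lt hz) (le_abs_self z)
        exact mul_le_mul_of_nonneg_right this (hK_nonneg z)
      linarith
  have hbnd_bot : Filter.Tendsto (fun x => x * kerV K x * kerW K x) Filter.atBot (nhds 0) := by
    rw [tendsto_zero_iff_abs_tendsto_zero]
    refine squeeze_zero' (Filter.Eventually.of_forall fun x => abs_nonneg _) ?_ htail_bot
    filter_upwards [Filter.eventually_le_atBot (0:ℝ)] with x hx
    have h1 : |x * kerV K x * kerW K x| ≤ -x * kerW K x := by
      rw [abs_mul, abs_mul, abs_of_nonneg (hV_nonneg x), abs_of_nonneg (hW_nonneg x),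
        abs_of_nonpos hx]
      nlinarith [mul_nonneg (mul_nonneg (neg_nonneg.2 hx) (hW_nonneg x))
        (sub_nonneg.2 (hV_le_one x))]
    have h2 : -x * kerW K x ≤ ∫ z in Set.Iic x, |z| * K z := by
      unfold kerW
      rw [← integral_const_mul]
      refine setIntegral_mono_on (hK_int.integrableOn.const_mul (-x)) hK_mom1.integrableOn
        measurableSet_Iic fun z hz => ?_
      have : -x ≤ |z| := by
        rw [abs_of_nonpos (le_trans hz hx)]
        exact neg_le_neg hz
      exact mul_le_mul_of_nonneg_right this (hK_nonneg z)
    simp only [Function.comp_apply]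
    linarith
  -- FTC on the whole line
  have hG_deriv : ∀ x, HasDerivAt (fun x => x * kerV K x * kerW K x)
      (kerV K x * kerW K x + (x * kerV K x * K x - x * kerW K x * K x)) x := by
    intro x
    have h := ((hasDerivAt_id x).mul (hV_deriv x)).mul (hW_deriv x)
    simp only [id_eq, one_mul, Pi.mul_def] at h
    exact h.congr_deriv (by ring)
  have hsub : Integrable (fun x => x * kerV K x * K x - x * kerW K x * K x) :=
    hxVK_int.sub hxWK_int
  have hf'_int : Integrable (fun x => kerV K x * kerW K x +
      (x * kerV K x * K x - x * kerW K x * K x)) := hVWprod_int.add hsub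
  have hFTC : (∫ x, (kerV K x * kerW K x +
      (x * kerV K x * K x - x * kerW K x * K x))) = 0 - 0 :=
    integral_of_hasDerivAt_of_tendsto hG_deriv hf'_int hbnd_bot hbnd_top
  rw [integral_add hVWprod_int hsub, integral_sub hxVK_int hxWK_int, sub_zero] at hFTC
  -- symmetry: ∫ x W K = - ∫ x V K
  have hsym : (∫ x, x * kerW K x * K x) = -∫ x, x * kerV K x * K x := by
    have h1 : (∫ x, x * kerV K x * K x) = ∫ x, (-x) * kerV K (-x) * K (-x) :=
      (integral_neg_eq_self _ _).symm
    rw [h1]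
    have h2 : (fun x => (-x) * kerV K (-x) * K (-x)) = fun x => -(x * kerW K x * K x) := by
      ext x
      rw [hK_symm x, ← hWVneg x]
      ring
    rw [h2, integral_neg, neg_neg]
  rw [hsym] at hFTC
  linarith
end

section
/- Let X be an absolutely continuous real random variable supported on Ω with E(X) and E(X²) finite, let g : ℝ → Ω be a continuously differentiable, strictly increasing bijection, let S_Y be the survival function of Y = g⁻¹(X), and define a(t) = ∫_t^{∞} g′(y) S_Y(y) dy and A(t) = ∫_t^{∞} g′(y) a(y) dy. Then A(g⁻¹(t)) = 𝕊̄_X(t) for every t ∈ Ω, where 𝕊̄_X(t) = ∫_t^{∞} 𝕊_X(x) dx and 𝕊_X(t) = ∫_t^{∞} S_X(x) dx. -/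
open MeasureTheory

/-- The survival function of `X`: `S_X(t) = P(X > t)`. -/
noncomputable def survival {α : Type*} [MeasurableSpace α] (μ : Measure α)
    (X : α → ℝ) (t : ℝ) : ℝ := (μ {ω | t < X ω}).toReal

/-- The cumulative survival function of `X`: `𝕊_X(t) = ∫_t^∞ S_X(x) dx`. -/
noncomputable def cumSurvival {α : Type*} [MeasurableSpace α] (μ : Measure α)
    (X : α → ℝ) (t : ℝ) : ℝ := ∫ x in Set.Ioi t, survival μ X x

/-- `𝕊̄_X(t) = ∫_t^∞ 𝕊_X(x) dx`. -/
noncomputable def cumCumSurvival {α : Type*} [MeasurableSpace α] (μ : Measure α)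
    (X : α → ℝ) (t : ℝ) : ℝ := ∫ x in Set.Ioi t, cumSurvival μ X x

/-- Change-of-variable property of `𝕊̄_X`: if `X` is supported on `Ω = range g`
with `E(X)` and `E(X²)` finite, `g : ℝ → Ω` is a continuously differentiable,
strictly increasing bijection with inverse `gInv`, `S_Y` is the survival function
of `Y = g⁻¹(X)`, `a(t) = ∫_t^∞ g′(y) S_Y(y) dy` and
`A(t) = ∫_t^∞ g′(y) a(y) dy`, then `A(g⁻¹ t) = 𝕊̄_X(t)` for every `t ∈ Ω`. -/
theorem cumCumSurvival_of_inverse_transform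
    {α : Type*} [MeasurableSpace α] (μ : Measure α) [IsProbabilityMeasure μ]
    (Ω : Set ℝ) (hΩ : Set.OrdConnected Ω)
    (g gInv fX : ℝ → ℝ)
    (hg_smooth : ContDiff ℝ 1 g) (hg_mono : StrictMono g)
    (hg_range : Set.range g = Ω)
    (hgInv_left : Function.LeftInverse gInv g)
    (hgInv_right : ∀ t ∈ Ω, g (gInv t) = t)
    (X : α → ℝ) (hX : Measurable X) (hXΩ : ∀ᵐ ω ∂μ, X ω ∈ Ω)
    (hfX_meas : Measurable fX) (hfX_nonneg : ∀ x, 0 ≤ fX x)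
    (hdens : μ.map X = volume.withDensity (fun x => ENNReal.ofReal (fX x)))
    (hM1 : Integrable X μ) (hM2 : Integrable (fun ω => (X ω) ^ 2) μ) :
    ∀ t ∈ Ω,
      (∫ y in Set.Ioi (gInv t),
          deriv g y *
            ∫ z in Set.Ioi y, deriv g z * survival μ (fun ω => gInv (X ω)) z) =
        cumCumSurvival μ X t := by
  intro t ht
  set S : ℝ → ℝ := survival μ X with hS
  -- derivative facts
  have hderiv : ∀ x, HasDerivAt g (deriv g x) x := fun x =>
    ((hg_smooth.differentiable one_ne_zero) x).hasDerivAt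
  have hd0 : ∀ x, 0 ≤ deriv g x := by
    intro x
    have h2 : Filter.Tendsto (slope g x) (nhdsWithin x (Set.Ioi x)) (nhds (deriv g x)) :=
      (hasDerivAt_iff_tendsto_slope.mp (hderiv x)).mono_left
        (nhdsWithin_mono x (fun y hy => ne_of_gt hy))
    refine ge_of_tendsto h2 ?_
    filter_upwards [self_mem_nhdsWithin] with y hy
    rw [slope_def_field]
    exact div_nonneg (sub_nonneg.mpr (hg_mono hy).le) (sub_nonneg.mpr hy.le)
  -- survival of Y in terms of survival of X
  have hSY : ∀ z, survival μ (fun ω => gInv (X ω)) z = S (g z) := by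
    intro z
    unfold survival
    congr 1
    apply measure_congr
    rw [Filter.eventuallyEq_set]
    filter_upwards [hXΩ] with ω hω
    show z < gInv (X ω) ↔ g z < X ω
    rw [← hgInv_right _ hω, hg_mono.lt_iff_lt, hgInv_right _ hω]
  -- image of Ioi under g
  have himg : ∀ y, g '' Set.Ioi y = Set.Ioi (g y) ∩ Ω := by
    intro y
    ext x
    constructor
    · rintro ⟨w, hw, rfl⟩
      exact ⟨hg_mono hw, hg_range ▸ Set.mem_range_self w⟩
    · rintro ⟨hx1, hx2⟩
      rw [← hg_range] at hx2
      obtain ⟨w, rfl⟩ := hx2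
      exact ⟨w, hg_mono.lt_iff_lt.mp hx1, rfl⟩
  have hnull : μ {ω | X ω ∉ Ω} = 0 := by
    have h := hXΩ
    rwa [MeasureTheory.ae_iff] at h
  -- survival vanishes above Ω
  have hSzero : ∀ c ∈ Ω, ∀ x, c < x → x ∉ Ω → S x = 0 := by
    intro c hc x hcx hxΩ
    have : μ {ω | x < X ω} = 0 := by
      refine measure_mono_null ?_ hnull
      intro ω hω
      simp only [Set.mem_setOf_eq] at hω ⊢
      intro hωΩ
      exact hxΩ (hΩ.out hc hωΩ ⟨hcx.le, hω.le⟩)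
    simp [hS, survival, this]
  -- cumulative survival vanishes above Ω
  have hSSzero : ∀ x, t < x → x ∉ Ω → cumSurvival μ X x = 0 := by
    intro x htx hxΩ
    unfold cumSurvival
    rw [setIntegral_congr_fun measurableSet_Ioi (g := fun _ => (0:ℝ)) ?_, integral_zero]
    intro z hz
    have hzΩ : z ∉ Ω := fun hzΩ => hxΩ (hΩ.out ht hzΩ ⟨htx.le, (Set.mem_Ioi.mp hz).le⟩)
    exact hSzero t ht z (htx.trans hz) hzΩ
  -- inner integral
  have key : ∀ y, (∫ z in Set.Ioi y, deriv g z * survival μ (fun ω => gInv (X ω)) z)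
      = cumSurvival μ X (g y) := by
    intro y
    have cov := integral_image_eq_integral_abs_deriv_smul (measurableSet_Ioi (a := y))
      (fun x _ => (hderiv x).hasDerivWithinAt) (hg_mono.injective.injOn) S
    have step1 : (∫ z in Set.Ioi y, deriv g z * survival μ (fun ω => gInv (X ω)) z)
        = ∫ z in Set.Ioi y, |deriv g z| • S (g z) := by
      refine setIntegral_congr_fun measurableSet_Ioi fun z _ => ?_
      rw [hSY, smul_eq_mul, abs_of_nonneg (hd0 z)]
    rw [step1, ← cov, himg]
    have hgy : g y ∈ Ω := hg_range ▸ Set.mem_range_self y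
    have := setIntegral_eq_of_subset_of_forall_diff_eq_zero (μ := volume) (measurableSet_Ioi (a := g y))
      (Set.inter_subset_left) (f := S) (fun x hx => hSzero (g y) hgy x hx.1 fun h => hx.2 ⟨hx.1, h⟩)
    rw [← this]
    rfl
  -- outer integral
  have cov2 := integral_image_eq_integral_abs_deriv_smul (measurableSet_Ioi (a := gInv t))
    (fun x _ => (hderiv x).hasDerivWithinAt) (hg_mono.injective.injOn) (cumSurvival μ X)
  have step2 : (∫ y in Set.Ioi (gInv t),
        deriv g y * ∫ z in Set.Ioi y, deriv g z * survival μ (fun ω => gInv (X ω)) z)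
      = ∫ y in Set.Ioi (gInv t), |deriv g y| • cumSurvival μ X (g y) := by
    refine setIntegral_congr_fun measurableSet_Ioi fun y _ => ?_
    rw [key, smul_eq_mul, abs_of_nonneg (hd0 y)]
  rw [step2, ← cov2, himg, hgInv_right t ht]
  have := setIntegral_eq_of_subset_of_forall_diff_eq_zero (μ := volume) (measurableSet_Ioi (a := t))
    (Set.inter_subset_left) (f := cumSurvival μ X)
    (fun x hx => hSSzero x hx.1 fun h => hx.2 ⟨hx.1, h⟩)
  rw [← this]
  rfl
end

section
/- Fix t ∈ Ω. Under conditions C1–C6, the expectation of the first proposed survival function estimator, E[S̃_{X,1}(t)] = E[(1/h) ∫_{g⁻¹(t)}^{∞} K((z − g⁻¹(X))/h) dz], satisfies, as h → 0⁺: E[S̃_{X,1}(t)] − S_X(t) = −(h²/2) b₁(t) ∫_{−∞}^{∞} y² K(y) dy + o(h²), where b₁(t) = g″(g⁻¹(t)) f_X(t) + (g′(g⁻¹(t)))² f_X′(t). -/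
open MeasureTheory Filter Asymptotics

section Aux

open Set

lemma shiftIoi (f : ℝ → ℝ) (c d : ℝ) :
    ∫ x in Set.Ioi c, f (x - d) = ∫ x in Set.Ioi (c - d), f x := by
  have A : MeasurableEmbedding fun x : ℝ => x - d :=
    (Homeomorph.subRight d).measurableEmbedding
  have := A.setIntegral_map (μ := volume) f (Ioi (c - d))
  rw [show Measure.map (fun x : ℝ => x - d) volume = volume by
    simpa [sub_eq_add_neg] using map_add_right_eq_self (volume : Measure ℝ) (-d)] at this
  rw [this]
  congr 1
  ext x; simp [sub_lt_sub_iff_right]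

lemma substIoi (K : ℝ → ℝ) {h : ℝ} (hh : 0 < h) (a c : ℝ) :
    ∫ z in Set.Ioi c, K ((z - a) / h) = h * ∫ u in Set.Ioi ((c - a)/h), K u := by
  have h1 : ∀ z : ℝ, (z - a)/h = z * h⁻¹ - a/h := by
    intro z; field_simp
  simp_rw [h1]
  rw [integral_comp_mul_right_Ioi (fun x => K (x - a/h)) c (inv_pos.mpr hh)]
  rw [shiftIoi K (c * h⁻¹) (a/h), smul_eq_mul, inv_inv,
    show c * h⁻¹ - a/h = (c-a)/h by field_simp]

lemma IoiSplit (f : ℝ → ℝ) (hint : Integrable f) {a b : ℝ} (hab : a ≤ b) :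
    ∫ x in Set.Ioi a, f x = (∫ x in a..b, f x) + ∫ x in Set.Ioi b, f x := by
  rw [intervalIntegral.integral_of_le hab, ← setIntegral_union]
  · rw [Set.Ioc_union_Ioi_eq_Ioi hab]
  · exact Set.Ioc_disjoint_Ioi le_rfl
  · exact measurableSet_Ioi
  · exact hint.integrableOn
  · exact hint.integrableOn

lemma IoiAsSub (f : ℝ → ℝ) (hint : Integrable f) (r : ℝ) :
    ∀ s, ∫ x in Set.Ioi s, f x = (∫ x in Set.Ioi r, f x) - ∫ x in r..s, f x := by
  intro s
  rcases le_total r s with hc | hc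
  · rw [IoiSplit f hint hc]; ring
  · rw [IoiSplit f hint (b := r) hc, intervalIntegral.integral_symm]; ring

lemma ftcIoi (f : ℝ → ℝ) (hint : Integrable f) (hcont : Continuous f) (r : ℝ) :
    HasDerivAt (fun s => ∫ x in Set.Ioi s, f x) (-(f r)) r := by
  have key : (fun s => ∫ x in Set.Ioi s, f x)
      = fun s => (∫ x in Set.Ioi r, f x) - ∫ x in r..s, f x :=
    funext (IoiAsSub f hint r)
  rw [key]
  have h1 : HasDerivAt (fun s => ∫ x in r..s, f x) (f r) r :=
    intervalIntegral.integral_hasDerivAt_right (hint.intervalIntegrable)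
      (hcont.stronglyMeasurable.stronglyMeasurableAtFilter) hcont.continuousAt
  have := (hasDerivAt_const r (∫ x in Set.Ioi r, f x)).sub h1
  rw [zero_sub] at this
  exact this

lemma kerVcont (K : ℝ → ℝ) (hK_cont : Continuous K) (hK_int : Integrable K) :
    Continuous (kerV K) :=
  continuous_iff_continuousAt.mpr fun r => (ftcIoi K hK_int hK_cont r).continuousAt

lemma oddZero (f : ℝ → ℝ) (hodd : ∀ x, f (-x) = - f x) : ∫ x, f x = 0 := by
  have h := integral_neg_eq_self f (volume : Measure ℝ)
  simp_rw [hodd, MeasureTheory.integral_neg] at h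
  linarith

lemma taylorBound {ψ fY : ℝ → ℝ} {y0 : ℝ}
    (hψ : ∀ s, HasDerivAt ψ (-(fY s)) s)
    (hfY : ∀ s, HasDerivAt fY (deriv fY s) s)
    (hcont : ContinuousAt (deriv fY) y0)
    {ε : ℝ} (hε : 0 < ε) :
    ∃ δ > 0, ∀ s : ℝ, |s| ≤ δ →
      |ψ (y0+s) - ψ y0 + s * fY y0 + s^2/2 * deriv fY y0| ≤ ε * s^2 := by
  obtain ⟨δ0, hδ0, hδ⟩ := Metric.continuousAt_iff.mp hcont ε hε
  refine ⟨δ0/2, by linarith, ?_⟩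
  set c1 := fY y0
  set c2 := deriv fY y0
  set φ : ℝ → ℝ := fun s => ψ (y0+s) - ψ y0 + s * c1 + s^2/2 * c2 with hφdef
  set φ' : ℝ → ℝ := fun s => -(fY (y0+s)) + c1 + s * c2 with hφ'def
  have hDφ : ∀ s, HasDerivAt φ (φ' s) s := by
    intro s
    have h1 : HasDerivAt (fun s : ℝ => ψ (y0+s)) (-(fY (y0+s))) s := by
      have := (hψ (y0+s)).comp s ((hasDerivAt_id s).const_add y0)
      simp only [mul_one] at this
      exact this
    have h2 : HasDerivAt (fun s : ℝ => s * c1) c1 s := by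
      simpa using (hasDerivAt_id s).mul_const c1
    have h3 : HasDerivAt (fun s : ℝ => s^2/2 * c2) (s * c2) s := by
      have := ((hasDerivAt_pow 2 s).div_const 2).mul_const c2
      norm_num at this
      convert this using 1
    have := ((h1.sub_const (ψ y0)).add h2).add h3
    exact this
  have hDφ' : ∀ s, HasDerivAt φ' (-(deriv fY (y0+s)) + c2) s := by
    intro s
    have h1 : HasDerivAt (fun s : ℝ => fY (y0+s)) (deriv fY (y0+s)) s := by
      have := (hfY (y0+s)).comp s ((hasDerivAt_id s).const_add y0)
      simp only [mul_one] at this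
      exact this
    have h2 : HasDerivAt (fun s : ℝ => s * c2) c2 s := by
      simpa using (hasDerivAt_id s).mul_const c2
    have := (h1.neg.add_const c1).add h2
    exact this
  have hI : Convex ℝ (Icc (-(δ0/2)) (δ0/2)) := convex_Icc _ _
  have hbd2 : ∀ v ∈ Icc (-(δ0/2)) (δ0/2), ‖-(deriv fY (y0+v)) + c2‖ ≤ ε := by
    intro v hv
    have hdist : dist (y0+v) y0 < δ0 := by
      have h1 : |v| ≤ δ0/2 := abs_le.mpr ⟨hv.1, hv.2⟩
      rw [Real.dist_eq, show y0 + v - y0 = v by ring]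
      exact lt_of_le_of_lt h1 (by linarith)
    have := le_of_lt (hδ hdist)
    rw [Real.dist_eq] at this
    rw [Real.norm_eq_abs]
    calc |(-(deriv fY (y0+v)) + c2)| = |deriv fY (y0+v) - c2| := by rw [← abs_neg]; ring_nf
    _ ≤ ε := this
  have hφ'bound : ∀ v ∈ Icc (-(δ0/2)) (δ0/2), ‖φ' v‖ ≤ ε * |v| := by
    intro v hv
    have h0 : (0:ℝ) ∈ Icc (-(δ0/2)) (δ0/2) := by constructor <;> [linarith; linarith]
    have := hI.norm_image_sub_le_of_norm_hasDerivWithin_le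
      (fun x hx => (hDφ' x).hasDerivWithinAt) hbd2 h0 hv
    have hφ'0 : φ' 0 = 0 := by simp [hφ'def, c1]
    simpa [hφ'0] using this
  intro s hs
  have hsmem : ∀ v ∈ Icc (-|s|) |s|, v ∈ Icc (-(δ0/2)) (δ0/2) := by
    intro v hv
    constructor
    · linarith [hv.1, neg_le_neg hs]
    · linarith [hv.2]
  have hφbound := (convex_Icc (-|s|) |s|).norm_image_sub_le_of_norm_hasDerivWithin_le
    (fun x hx => (hDφ x).hasDerivWithinAt)
    (fun x hx => le_trans (hφ'bound x (hsmem x hx))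
      (by
        have : |x| ≤ |s| := abs_le.mpr ⟨hx.1, hx.2⟩
        nlinarith [hε.le]))
    (C := ε * |s|)
    (show (0:ℝ) ∈ Icc (-|s|) |s| by
      constructor
      · simp [neg_nonpos, abs_nonneg]
      · exact abs_nonneg s)
    (show s ∈ Icc (-|s|) |s| from ⟨neg_abs_le s, le_abs_self s⟩)
  have hφ0 : φ 0 = 0 := by simp [hφdef]
  have hfin : ‖φ s‖ ≤ ε * |s| * |s| := by simpa [hφ0] using hφbound
  calc |ψ (y0+s) - ψ y0 + s * fY y0 + s^2/2 * deriv fY y0| = ‖φ s‖ := rfl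
  _ ≤ ε * |s| * |s| := hfin
  _ = ε * s^2 := by rw [mul_assoc, ← abs_mul, abs_mul_self, sq]

lemma fubiniStep {α : Type*} [MeasurableSpace α] (μ : Measure α) [IsProbabilityMeasure μ]
    (K : ℝ → ℝ) (hK_cont : Continuous K) (hK_nonneg : ∀ x, 0 ≤ K x) (hK_int : Integrable K)
    (Y : α → ℝ) (hY : Measurable Y) {h : ℝ} (hh : 0 < h) (y0 : ℝ) :
    ∫ ω, kerV K ((y0 - Y ω)/h) ∂μ = ∫ u, K u * (μ {ω | y0 - h*u < Y ω}).toReal := by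
  set F : α × ℝ → ENNReal :=
    fun p => ({p : α × ℝ | y0 - h * p.2 < Y p.1}).indicator
      (fun p => ENNReal.ofReal (K p.2)) p with hF
  have hsmeas : MeasurableSet {p : α × ℝ | y0 - h * p.2 < Y p.1} :=
    measurableSet_lt (measurable_const.sub (measurable_snd.const_mul h))
      (hY.comp measurable_fst)
  have hFmeas : Measurable F :=
    ((ENNReal.measurable_ofReal.comp (hK_cont.measurable.comp measurable_snd))).indicator hsmeas
  have hKlt : ∫⁻ u, ENNReal.ofReal (K u) < ⊤ := by
    have := hK_int.hasFiniteIntegral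
    rwa [hasFiniteIntegral_iff_ofReal (Eventually.of_forall hK_nonneg)] at this
  have key1 : ∀ ω, (fun u => F (ω, u)) = (Ioi ((y0 - Y ω)/h)).indicator
      (fun u => ENNReal.ofReal (K u)) := by
    intro ω
    funext u
    have hiff : (ω, u) ∈ {p : α × ℝ | y0 - h * p.2 < Y p.1} ↔ u ∈ Ioi ((y0 - Y ω)/h) := by
      simp only [mem_setOf_eq, mem_Ioi, div_lt_iff₀ hh]
      constructor <;> intro hx <;> nlinarith
    simp only [hF, Set.indicator_apply]
    rw [if_congr hiff rfl rfl]
  have key1' : ∀ ω, ∫⁻ u, F (ω, u) = ∫⁻ u in Ioi ((y0 - Y ω)/h), ENNReal.ofReal (K u) := by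
    intro ω; rw [key1 ω, lintegral_indicator measurableSet_Ioi _]
  have hkerVeq : ∀ ω, ENNReal.ofReal (kerV K ((y0 - Y ω)/h)) = ∫⁻ u, F (ω, u) := by
    intro ω
    rw [key1' ω]
    rw [show kerV K ((y0 - Y ω)/h) = ∫ z in Ioi ((y0 - Y ω)/h), K z from rfl]
    rw [ofReal_integral_eq_lintegral_ofReal hK_int.integrableOn
      (Eventually.of_forall (fun x => hK_nonneg x))]
  have hswap : ∫⁻ ω, ∫⁻ u, F (ω, u) ∂(volume) ∂μ = ∫⁻ u, ∫⁻ ω, F (ω, u) ∂μ ∂(volume) :=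
    lintegral_lintegral_swap hFmeas.aemeasurable
  have key2 : ∀ u : ℝ, ∫⁻ ω, F (ω, u) ∂μ = ENNReal.ofReal (K u) * μ {ω | y0 - h*u < Y ω} := by
    intro u
    have heq : (fun ω => F (ω, u)) = ({ω | y0 - h*u < Y ω}).indicator
        (fun _ => ENNReal.ofReal (K u)) := by
      funext ω
      simp only [hF, Set.indicator_apply]
      rfl
    rw [heq, lintegral_indicator (measurableSet_lt measurable_const hY) _,
      setLIntegral_const, mul_comm]
  have hLHS : ∫ ω, kerV K ((y0 - Y ω)/h) ∂μ = (∫⁻ ω, ∫⁻ u, F (ω, u) ∂(volume) ∂μ).toReal := by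
    have h1 : 0 ≤ᵐ[μ] fun ω => kerV K ((y0 - Y ω)/h) :=
      Eventually.of_forall (fun ω => setIntegral_nonneg measurableSet_Ioi
        (fun x _ => hK_nonneg x))
    have h2 : AEStronglyMeasurable (fun ω => kerV K ((y0 - Y ω)/h)) μ :=
      (((kerVcont K hK_cont hK_int).measurable).comp
        ((measurable_const.sub hY).div_const h)).aestronglyMeasurable
    calc ∫ ω, kerV K ((y0 - Y ω)/h) ∂μ
        = (∫⁻ ω, ENNReal.ofReal (kerV K ((y0 - Y ω)/h)) ∂μ).toReal :=
          integral_eq_lintegral_of_nonneg_ae h1 h2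
      _ = (∫⁻ ω, ∫⁻ u, F (ω, u) ∂(volume) ∂μ).toReal := by
          congr 1
          exact lintegral_congr (fun ω => hkerVeq ω)
  have hmono : Monotone fun u : ℝ => (μ {ω | y0 - h*u < Y ω}).toReal := by
    intro u v huv
    refine ENNReal.toReal_mono (measure_ne_top μ _) (measure_mono ?_)
    intro ω hω
    have : y0 - h*v ≤ y0 - h*u := by nlinarith
    exact lt_of_le_of_lt this hω
  have hRHS : ∫ u, K u * (μ {ω | y0 - h*u < Y ω}).toReal
      = (∫⁻ u, ∫⁻ ω, F (ω, u) ∂μ ∂(volume)).toReal := by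
    calc ∫ u, K u * (μ {ω | y0 - h*u < Y ω}).toReal
        = (∫⁻ u, ENNReal.ofReal (K u * (μ {ω | y0 - h*u < Y ω}).toReal)).toReal :=
          integral_eq_lintegral_of_nonneg_ae
            (Eventually.of_forall (fun u => mul_nonneg (hK_nonneg u) ENNReal.toReal_nonneg))
            ((hK_cont.measurable.mul hmono.measurable).aestronglyMeasurable)
      _ = (∫⁻ u, ∫⁻ ω, F (ω, u) ∂μ ∂(volume)).toReal := by
          congr 1
          refine lintegral_congr fun u => ?_
          rw [key2 u, ENNReal.ofReal_mul (hK_nonneg u),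
            ENNReal.ofReal_toReal (measure_ne_top μ _)]
  rw [hLHS, hswap, hRHS]

lemma tailSmall (f : ℝ → ℝ) (hint : Integrable f) {ε : ℝ} (hε : 0 < ε) :
    ∃ R : ℝ, 0 < R ∧ ∫ x in {x : ℝ | R < |x|}, f x < ε := by
  have T : Tendsto (fun n : ℕ => ∫ x in (-(n:ℝ))..(n:ℝ), f x) atTop (nhds (∫ x, f x)) :=
    intervalIntegral_tendsto_integral hint
      (tendsto_neg_atTop_atBot.comp tendsto_natCast_atTop_atTop) tendsto_natCast_atTop_atTop
  have hev : ∀ᶠ n : ℕ in atTop, (∫ x, f x) - ε < ∫ x in (-(n:ℝ))..(n:ℝ), f x :=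
    T.eventually (eventually_gt_nhds (by linarith))
  obtain ⟨n, hn, hn1⟩ := (hev.and (eventually_ge_atTop 1)).exists
  refine ⟨(n:ℝ), by exact_mod_cast Nat.lt_of_lt_of_le Nat.zero_lt_one hn1, ?_⟩
  have hAmeas : MeasurableSet {x : ℝ | (n:ℝ) < |x|} :=
    measurableSet_lt measurable_const continuous_abs.measurable
  have hcompl : {x : ℝ | (n:ℝ) < |x|}ᶜ = Icc (-(n:ℝ)) (n:ℝ) := by
    ext x
    simp [mem_Icc, abs_le, not_lt]
  have hsplit := integral_add_compl hAmeas hint (f := f)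
  have hIcc : ∫ x in {x : ℝ | (n:ℝ) < |x|}ᶜ, f x = ∫ x in (-(n:ℝ))..(n:ℝ), f x := by
    rw [hcompl, intervalIntegral.integral_of_le (by simp : -(n:ℝ) ≤ (n:ℝ)),
      ← integral_Icc_eq_integral_Ioc]
  linarith [hsplit, hIcc, hn]

end Aux
set_option maxHeartbeats 1000000 in
/-- Bias expansion of the first proposed survival function estimator
`S̃_{X,1}(t)`:  as `h → 0⁺`,
`E[S̃_{X,1}(t)] − S_X(t) = −(h²/2) b₁(t) ∫ y² K(y) dy + o(h²)`, where
`b₁(t) = g″(g⁻¹ t) f_X(t) + (g′(g⁻¹ t))² f_X′(t)`. -/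
theorem bias_survival_estimator_one
    {α : Type*} [MeasurableSpace α] (μ : Measure α) [IsProbabilityMeasure μ]
    -- C1: the kernel
    (K : ℝ → ℝ) (hK_cont : Continuous K) (hK_nonneg : ∀ x, 0 ≤ K x)
    (hK_symm : ∀ x, K (-x) = K x) (hK_one : (∫ x, K x) = 1)
    (hK_mom2 : Integrable (fun x => x ^ 2 * K x))
    -- C3, C4: the transformation
    (Ω : Set ℝ) (hΩ : Set.OrdConnected Ω)
    (g gInv fX : ℝ → ℝ)
    (hg_smooth : ContDiff ℝ 2 g) (hg_mono : StrictMono g)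
    (hg_range : Set.range g = Ω)
    (hgInv_left : Function.LeftInverse gInv g)
    (hgInv_right : ∀ s ∈ Ω, g (gInv s) = s)
    (hgInv_meas : Measurable gInv)
    -- the random variable and its density
    (X : α → ℝ) (hX : Measurable X) (hXΩ : ∀ᵐ ω ∂μ, X ω ∈ Ω)
    (hfX_smooth : ContDiff ℝ 2 fX) (hfX_nonneg : ∀ x, 0 ≤ fX x)
    (hdens : μ.map X = volume.withDensity (fun x => ENNReal.ofReal (fX x)))
    -- C4: the density f_Y(y) = g′(y) f_X(g(y)) of Y = g⁻¹(X) is twice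
    -- continuously differentiable with bounded second derivative
    (hfY_smooth : ContDiff ℝ 2 (fun y => deriv g y * fX (g y)))
    (hfY_bdd : ∃ C : ℝ, ∀ y,
      |deriv (deriv (fun z => deriv g z * fX (g z))) y| ≤ C)
    -- C5
    (hgK : ∃ ε > (0 : ℝ), ∀ u : ℝ, |u| < ε →
      Integrable (fun x => deriv g (u * x) * K x))
    (hgV : ∃ ε > (0 : ℝ), ∀ u : ℝ, |u| < ε →
      Integrable (fun x => deriv g (u * x) * kerV K x))
    -- C6: moments
    (hM1 : Integrable X μ) (hM2 : Integrable (fun ω => (X ω) ^ 2) μ)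
    (hM3 : Integrable (fun ω => (X ω) ^ 3) μ)
    -- the point of evaluation
    (t : ℝ) (ht : t ∈ Ω)
    :
    (fun h : ℝ =>
        (∫ ω, (1 / h) *
            (∫ z in Set.Ioi (gInv t), K ((z - gInv (X ω)) / h)) ∂μ)
          - survival μ X t
          + h ^ 2 / 2 *
              (deriv (deriv g) (gInv t) * fX t +
                (deriv g (gInv t)) ^ 2 * deriv fX t) *
              ∫ y, y ^ 2 * K y)
      =o[nhdsWithin (0 : ℝ) (Set.Ioi 0)] (fun h => h ^ 2) := by
  classical
  set y0 : ℝ := gInv t with hy0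
  set fY : ℝ → ℝ := fun y => deriv g y * fX (g y) with hfYdef
  have hgy0 : g y0 = t := hgInv_right t ht
  -- integrability of K
  have hK_int : Integrable K := by
    by_contra hcon
    rw [integral_undef hcon] at hK_one
    exact one_ne_zero hK_one.symm
  have hfX_cont : Continuous fX := hfX_smooth.continuous
  -- the density integrates to one
  have hlint : ∫⁻ x, ENNReal.ofReal (fX x) = 1 := by
    have h1 : IsProbabilityMeasure (μ.map X) := Measure.isProbabilityMeasure_map hX.aemeasurable
    have h2 := h1.measure_univ
    rw [hdens, withDensity_apply _ MeasurableSet.univ, Measure.restrict_univ] at h2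
    exact h2
  have hfX_int : Integrable fX := by
    refine ⟨hfX_cont.aestronglyMeasurable, ?_⟩
    rw [hasFiniteIntegral_iff_ofReal (Eventually.of_forall hfX_nonneg), hlint]
    exact ENNReal.one_lt_top
  have hfX_int1 : ∫ x, fX x = 1 := by
    rw [integral_eq_lintegral_of_nonneg_ae (Eventually.of_forall hfX_nonneg)
      hfX_cont.aestronglyMeasurable, hlint]
    simp
  -- survival function identities
  have hSX : ∀ r : ℝ, (μ {ω | r < X ω}).toReal = ∫ x in Set.Ioi r, fX x := by
    intro r
    have h1 : μ {ω | r < X ω} = (μ.map X) (Set.Ioi r) := by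
      rw [Measure.map_apply hX measurableSet_Ioi]
      rfl
    rw [h1, hdens, withDensity_apply _ measurableSet_Ioi,
      ← ofReal_integral_eq_lintegral_ofReal hfX_int.integrableOn
        (Eventually.of_forall hfX_nonneg),
      ENNReal.toReal_ofReal (setIntegral_nonneg measurableSet_Ioi fun x _ => hfX_nonneg x)]
  set ψ : ℝ → ℝ := fun s => ∫ x in Set.Ioi (g s), fX x with hψdef
  have hSY : ∀ s : ℝ, (μ {ω | s < gInv (X ω)}).toReal = ψ s := by
    intro s
    have hae : {ω | s < gInv (X ω)} =ᵐ[μ] {ω | g s < X ω} := by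
      rw [Filter.eventuallyEq_set]
      filter_upwards [hXΩ] with ω hω
      constructor
      · intro hlt
        have := hg_mono.lt_iff_lt.mpr hlt
        rwa [hgInv_right (X ω) hω] at this
      · intro hlt
        have h2 : g s < g (gInv (X ω)) := by rwa [hgInv_right (X ω) hω]
        exact hg_mono.lt_iff_lt.mp h2
    rw [measure_congr hae, hSX (g s)]
  have hsurv : survival μ X t = ψ y0 := by
    rw [show survival μ X t = (μ {ω | t < X ω}).toReal from rfl, hSX t]
    simp only [hψdef]
    rw [hgy0]
  -- derivative of ψ
  have hg_diff : Differentiable ℝ g := hg_smooth.differentiable (by norm_num)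
  have hψd : ∀ s, HasDerivAt ψ (-(fY s)) s := by
    intro s
    have h1 : HasDerivAt (fun r => ∫ x in Set.Ioi r, fX x) (-(fX (g s))) (g s) :=
      ftcIoi fX hfX_int hfX_cont (g s)
    have h2 : HasDerivAt g (deriv g s) s := (hg_diff s).hasDerivAt
    have h3 := h1.comp s h2
    have : -(fX (g s)) * deriv g s = -(fY s) := by rw [hfYdef]; ring
    rw [this] at h3
    exact h3
  have hψcont : Continuous ψ := continuous_iff_continuousAt.mpr fun s => (hψd s).continuousAt
  have hψ0 : ∀ s, 0 ≤ ψ s := fun s =>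
    setIntegral_nonneg measurableSet_Ioi fun x _ => hfX_nonneg x
  have hψ1 : ∀ s, ψ s ≤ 1 := by
    intro s
    rw [← hfX_int1]
    exact setIntegral_le_integral hfX_int (Eventually.of_forall hfX_nonneg)
  -- fY facts
  have hfY_d : ∀ s, HasDerivAt fY (deriv fY s) s :=
    fun s => ((hfY_smooth.differentiable (by norm_num)) s).hasDerivAt
  have hfY'cont : Continuous (deriv fY) := hfY_smooth.continuous_deriv (by norm_num)
  set B : ℝ := deriv (deriv g) y0 * fX t + (deriv g y0) ^ 2 * deriv fX t with hBdef
  have hb : deriv fY y0 = B := by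
    have hdg1 : ContDiff ℝ 1 (deriv g) := by
      have h2 : ContDiff ℝ (1+1 : ℕ) g := by exact_mod_cast hg_smooth
      exact (contDiff_succ_iff_deriv.mp (by exact_mod_cast h2)).2.2
    have hdg : HasDerivAt (deriv g) (deriv (deriv g) y0) y0 :=
      ((hdg1.differentiable (by norm_num)) y0).hasDerivAt
    have hfXd : HasDerivAt fX (deriv fX (g y0)) (g y0) :=
      ((hfX_smooth.differentiable (by norm_num)) (g y0)).hasDerivAt
    have hgd : HasDerivAt g (deriv g y0) y0 := (hg_diff y0).hasDerivAt
    have hcomp : HasDerivAt (fun y => fX (g y)) (deriv fX (g y0) * deriv g y0) y0 :=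
      hfXd.comp y0 hgd
    have hprod := hdg.mul hcomp
    have := hprod.deriv
    change deriv fY y0 = _ at this
    rw [this, hBdef, hgy0]
    ring
  -- integral of u K u is zero
  have huK_int : Integrable (fun u => u * K u) := by
    refine (hK_int.add hK_mom2).mono
      ((continuous_id.mul hK_cont).aestronglyMeasurable)
      (Eventually.of_forall fun u => ?_)
    simp only [Real.norm_eq_abs, Pi.add_apply]
    have h0 := hK_nonneg u
    rw [abs_mul, abs_of_nonneg h0,
      abs_of_nonneg (by positivity : (0:ℝ) ≤ K u + u^2 * K u)]
    nlinarith [mul_nonneg (sq_nonneg (|u| - 1)) h0, sq_abs u]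
  have hodd : ∫ u, u * K u = 0 := by
    refine oddZero _ fun u => ?_
    rw [hK_symm u]
    ring
  set I2 : ℝ := ∫ y, y ^ 2 * K y with hI2def
  have hI2nn : 0 ≤ I2 := integral_nonneg fun u => mul_nonneg (sq_nonneg u) (hK_nonneg u)
  -- expansion of the integrand
  set φ : ℝ → ℝ := fun s => ψ (y0 + s) - ψ y0 + s * fY y0 + s^2/2 * deriv fY y0 with hφdef
  have hφcont : Continuous φ := by
    apply Continuous.add
    apply Continuous.add
    apply Continuous.sub
    · exact hψcont.comp (continuous_const.add continuous_id)
    · exact continuous_const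
    · exact continuous_id.mul continuous_const
    · exact (continuous_pow 2).div_const 2 |>.mul continuous_const
  have hexp : ∀ h u : ℝ, K u * φ (-(h*u))
      = K u * ψ (y0 - h*u) - ψ y0 * K u - (h * fY y0) * (u * K u)
        + (h^2/2 * deriv fY y0) * (u^2 * K u) := by
    intro h u
    have h1 : φ (-(h*u)) = ψ (y0 - h*u) - ψ y0 + (-(h*u)) * fY y0
        + (-(h*u))^2/2 * deriv fY y0 := by
      rw [hφdef]
      simp only []
      rw [show y0 + -(h*u) = y0 - h*u by ring]
    rw [h1]
    ring
  -- integrability for fixed h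
  have hIψ : ∀ h : ℝ, Integrable (fun u => K u * ψ (y0 - h*u)) := by
    intro h
    refine hK_int.mono
      ((hK_cont.mul (hψcont.comp (continuous_const.sub (continuous_const.mul continuous_id)))).aestronglyMeasurable)
      (Eventually.of_forall fun u => ?_)
    simp only [Real.norm_eq_abs]
    rw [abs_mul, abs_of_nonneg (hK_nonneg u)]
    have h1 : |ψ (y0 - h*u)| ≤ 1 := abs_le.mpr ⟨by linarith [hψ0 (y0-h*u)], hψ1 _⟩
    nlinarith [hK_nonneg u]
  have hIφ : ∀ h : ℝ, Integrable (fun u => K u * φ (-(h*u))) := by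
    intro h
    have := (((hIψ h).sub (hK_int.const_mul (ψ y0))).sub
      (huK_int.const_mul (h * fY y0))).add (hK_mom2.const_mul (h^2/2 * deriv fY y0))
    refine this.congr (Eventually.of_forall fun u => ?_)
    exact (hexp h u).symm
  -- main identity for positive h
  have hmain : ∀ h : ℝ, 0 < h →
      ((∫ ω, (1 / h) * (∫ z in Set.Ioi (gInv t), K ((z - gInv (X ω)) / h)) ∂μ)
          - survival μ X t + h ^ 2 / 2 * B * I2)
        = ∫ u, K u * φ (-(h*u)) := by
    intro h hh
    have step1 : ∀ ω : α, (1 / h) * (∫ z in Set.Ioi (gInv t), K ((z - gInv (X ω)) / h))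
        = kerV K ((y0 - gInv (X ω))/h) := by
      intro ω
      rw [substIoi K hh (gInv (X ω)) (gInv t), ← mul_assoc, one_div,
        inv_mul_cancel₀ hh.ne', one_mul]
      rfl
    rw [show (∫ ω, (1 / h) * (∫ z in Set.Ioi (gInv t), K ((z - gInv (X ω)) / h)) ∂μ)
        = ∫ ω, kerV K ((y0 - gInv (X ω))/h) ∂μ from
      integral_congr_ae (Eventually.of_forall step1)]
    rw [fubiniStep μ K hK_cont hK_nonneg hK_int (fun ω => gInv (X ω))
      (hgInv_meas.comp hX) hh y0]
    beta_reduce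
    rw [show (∫ u, K u * (μ {ω | y0 - h*u < gInv (X ω)}).toReal)
        = ∫ u, K u * ψ (y0 - h*u) from
      integral_congr_ae (Eventually.of_forall fun u => by
        beta_reduce; rw [hSY (y0 - h*u)])]
    rw [hsurv]
    rw [show (∫ u, K u * φ (-(h*u)))
        = ∫ u, (K u * ψ (y0 - h*u) - ψ y0 * K u - (h * fY y0) * (u * K u)
          + (h^2/2 * deriv fY y0) * (u^2 * K u)) from
      integral_congr_ae (Eventually.of_forall fun u => by
        beta_reduce; rw [hexp h u])]
    have int1 : Integrable (fun u => K u * ψ (y0 - h*u) - ψ y0 * K u) :=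
      (hIψ h).sub (hK_int.const_mul (ψ y0))
    have int2 : Integrable
        (fun u => K u * ψ (y0 - h*u) - ψ y0 * K u - (h * fY y0) * (u * K u)) :=
      int1.sub (huK_int.const_mul (h * fY y0))
    have int3 : Integrable (fun u => (h^2/2 * deriv fY y0) * (u^2 * K u)) :=
      hK_mom2.const_mul (h^2/2 * deriv fY y0)
    rw [integral_add int2 int3, integral_sub int1 (huK_int.const_mul (h * fY y0)),
      integral_sub (hIψ h) (hK_int.const_mul (ψ y0)),
      integral_const_mul, integral_const_mul, integral_const_mul,
      hK_one, hodd, hb]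
    rw [← hI2def]
    ring
  -- the little-o statement for the model function
  have hG : (fun h : ℝ => ∫ u, K u * φ (-(h*u)))
      =o[nhdsWithin (0 : ℝ) (Set.Ioi 0)] fun h => h ^ 2 := by
    rw [isLittleO_iff]
    intro c hc
    have hε' : (0:ℝ) < c / (2 * (I2 + 1)) := by positivity
    obtain ⟨δ, hδpos, hTay⟩ := taylorBound hψd hfY_d hfY'cont.continuousAt hε'
    set a : ℝ := |fY y0| with hadef
    set b' : ℝ := |deriv fY y0| with hb'def
    set Cδ : ℝ := 1/δ^2 + a/δ + b'/2 with hCδdef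
    have hCδnn : 0 ≤ Cδ := by
      have : 0 ≤ a := abs_nonneg _
      have : 0 ≤ b' := abs_nonneg _
      positivity
    have hεT : (0:ℝ) < c / (2 * (Cδ + 1)) := by positivity
    obtain ⟨R, hRpos, hTail⟩ := tailSmall (fun u => u^2 * K u) hK_mom2 hεT
    filter_upwards [Ioo_mem_nhdsGT_of_mem
      (Set.left_mem_Ico.mpr (by positivity : (0:ℝ) < δ/R))] with h hh
    obtain ⟨hh0, hhR⟩ := hh
    have hRδ : R < δ/h := by
      rw [lt_div_iff₀ hh0]
      calc R * h = h * R := mul_comm _ _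
      _ < (δ/R) * R := by exact mul_lt_mul_of_pos_right hhR hRpos
      _ = δ := by field_simp
    set A : Set ℝ := {u : ℝ | δ/h < |u|} with hAdef
    have hA : MeasurableSet A := measurableSet_lt measurable_const continuous_abs.measurable
    have hInorm : Integrable (fun u => ‖K u * φ (-(h*u))‖) := (hIφ h).norm
    -- bound on A
    have hboundA : ∀ u ∈ A, ‖K u * φ (-(h*u))‖ ≤ (Cδ * h^2) * (u^2 * K u) := by
      intro u hu
      have h1 : δ < h * |u| := by
        have := hu
        rw [hAdef, Set.mem_setOf_eq, div_lt_iff₀ hh0] at this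
        linarith [this]
      have hKnn := hK_nonneg u
      have habs2 : |u|^2 = u^2 := sq_abs u
      have hφb : |φ (-(h*u))| ≤ 1 + (h*|u|) * a + (h*|u|)^2/2 * b' := by
        have e1 : φ (-(h*u)) = (ψ (y0 + -(h*u)) - ψ y0) + ((-(h*u)) * fY y0
            + (-(h*u))^2/2 * deriv fY y0) := by rw [hφdef]; ring
        rw [e1]
        refine le_trans (abs_add_le _ _) ?_
        have e2 : |ψ (y0 + -(h*u)) - ψ y0| ≤ 1 := by
          have := hψ0 (y0 + -(h*u)); have := hψ1 (y0 + -(h*u))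
          have := hψ0 y0; have := hψ1 y0
          rw [abs_sub_le_iff]; constructor <;> linarith
        have e3 : |(-(h*u)) * fY y0 + (-(h*u))^2/2 * deriv fY y0|
            ≤ (h*|u|) * a + (h*|u|)^2/2 * b' := by
          refine le_trans (abs_add_le _ _) ?_
          have e4 : |(-(h*u)) * fY y0| = (h*|u|) * a := by
            rw [abs_mul, hadef, abs_neg, abs_mul, abs_of_nonneg hh0.le]
          have e5 : |(-(h*u))^2/2 * deriv fY y0| = (h*|u|)^2/2 * b' := by
            rw [abs_mul, hb'def]
            congr 1
            rw [abs_div, abs_of_nonneg (sq_nonneg _), neg_sq, mul_pow, mul_pow,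
              habs2]
            norm_num
          rw [e4, e5]
        linarith
      have hchain : |φ (-(h*u))| ≤ (h*|u|)^2 * Cδ := by
        have c1 : (1:ℝ) ≤ (h*|u|)^2 / δ^2 := by
          rw [le_div_iff₀ (by positivity)]
          nlinarith
        have c2 : h*|u| ≤ (h*|u|)^2 / δ := by
          rw [le_div_iff₀ hδpos]
          nlinarith
        have hab : 0 ≤ a := abs_nonneg _
        have hbb : 0 ≤ b' := abs_nonneg _
        calc |φ (-(h*u))| ≤ 1 + (h*|u|) * a + (h*|u|)^2/2 * b' := hφb
        _ ≤ (h*|u|)^2/δ^2 + ((h*|u|)^2/δ) * a + (h*|u|)^2/2 * b' := by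
            have := mul_le_mul_of_nonneg_right c2 hab
            linarith
        _ = (h*|u|)^2 * Cδ := by rw [hCδdef]; ring
      rw [norm_mul, Real.norm_eq_abs, Real.norm_eq_abs, abs_of_nonneg hKnn]
      calc K u * |φ (-(h*u))| ≤ K u * ((h*|u|)^2 * Cδ) :=
        mul_le_mul_of_nonneg_left hchain hKnn
      _ = (Cδ * h^2) * (u^2 * K u) := by rw [mul_pow, habs2]; ring
    -- bound on Aᶜ
    have hboundAc : ∀ u ∈ Aᶜ, ‖K u * φ (-(h*u))‖
        ≤ (c / (2 * (I2 + 1)) * h^2) * (u^2 * K u) := by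
      intro u hu
      have h1 : |u| ≤ δ/h := by
        rw [hAdef] at hu
        simpa [Set.mem_setOf_eq, not_lt] using hu
      have h2 : |(-(h*u))| ≤ δ := by
        rw [abs_neg, abs_mul, abs_of_nonneg hh0.le]
        calc h * |u| ≤ h * (δ/h) := mul_le_mul_of_nonneg_left h1 hh0.le
        _ = δ := by field_simp
      have h3 := hTay (-(h*u)) h2
      have h4 : |φ (-(h*u))| ≤ c / (2 * (I2 + 1)) * (h^2 * u^2) := by
        calc |φ (-(h*u))| ≤ c / (2 * (I2 + 1)) * (-(h*u))^2 := h3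
        _ = c / (2 * (I2 + 1)) * (h^2 * u^2) := by rw [neg_sq, mul_pow]
      rw [norm_mul, Real.norm_eq_abs, Real.norm_eq_abs, abs_of_nonneg (hK_nonneg u)]
      calc K u * |φ (-(h*u))| ≤ K u * (c / (2 * (I2 + 1)) * (h^2 * u^2)) :=
        mul_le_mul_of_nonneg_left h4 (hK_nonneg u)
      _ = (c / (2 * (I2 + 1)) * h^2) * (u^2 * K u) := by ring
    -- assemble
    have hTA : ∫ u in A, ‖K u * φ (-(h*u))‖ ≤ (Cδ * h^2) * (c / (2 * (Cδ + 1))) := by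
      calc ∫ u in A, ‖K u * φ (-(h*u))‖
          ≤ ∫ u in A, (Cδ * h^2) * (u^2 * K u) :=
            setIntegral_mono_on hInorm.integrableOn
              ((hK_mom2.const_mul _).integrableOn) hA hboundA
        _ = (Cδ * h^2) * ∫ u in A, u^2 * K u := by rw [integral_const_mul]
        _ ≤ (Cδ * h^2) * ∫ u in {x : ℝ | R < |x|}, u^2 * K u := by
            refine mul_le_mul_of_nonneg_left ?_ (by positivity)
            refine setIntegral_mono_set hK_mom2.integrableOn
              (Eventually.of_forall fun u => mul_nonneg (sq_nonneg u) (hK_nonneg u))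
              (HasSubset.Subset.eventuallyLE ?_)
            intro u hu
            rw [hAdef, Set.mem_setOf_eq] at hu
            exact Set.mem_setOf_eq ▸ lt_trans hRδ hu
        _ ≤ (Cδ * h^2) * (c / (2 * (Cδ + 1))) :=
            mul_le_mul_of_nonneg_left hTail.le (by positivity)
    have hTAc : ∫ u in Aᶜ, ‖K u * φ (-(h*u))‖ ≤ (c / (2 * (I2 + 1)) * h^2) * I2 := by
      calc ∫ u in Aᶜ, ‖K u * φ (-(h*u))‖
          ≤ ∫ u in Aᶜ, (c / (2 * (I2 + 1)) * h^2) * (u^2 * K u) :=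
            setIntegral_mono_on hInorm.integrableOn
              ((hK_mom2.const_mul _).integrableOn) hA.compl hboundAc
        _ = (c / (2 * (I2 + 1)) * h^2) * ∫ u in Aᶜ, u^2 * K u := by
            rw [integral_const_mul]
        _ ≤ (c / (2 * (I2 + 1)) * h^2) * I2 := by
            refine mul_le_mul_of_nonneg_left ?_ (by positivity)
            exact setIntegral_le_integral hK_mom2
              (Eventually.of_forall fun u => mul_nonneg (sq_nonneg u) (hK_nonneg u))
    have hfinal : ‖∫ u, K u * φ (-(h*u))‖ ≤ c * h^2 := by
      calc ‖∫ u, K u * φ (-(h*u))‖ ≤ ∫ u, ‖K u * φ (-(h*u))‖ :=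
        norm_integral_le_integral_norm _
      _ = (∫ u in A, ‖K u * φ (-(h*u))‖) + ∫ u in Aᶜ, ‖K u * φ (-(h*u))‖ :=
          (integral_add_compl hA hInorm).symm
      _ ≤ (Cδ * h^2) * (c / (2 * (Cδ + 1))) + (c / (2 * (I2 + 1)) * h^2) * I2 := by
          linarith [hTA, hTAc]
      _ ≤ c/2 * h^2 + c/2 * h^2 := by
          have k1 : Cδ * (c / (2 * (Cδ + 1))) ≤ c/2 := by
            rw [mul_div_assoc']
            rw [div_le_iff₀ (by positivity)]
            nlinarith [hc.le, hCδnn]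
          have k2 : c / (2 * (I2 + 1)) * I2 ≤ c/2 := by
            rw [div_mul_eq_mul_div, div_le_iff₀ (by positivity)]
            nlinarith [hc.le, hI2nn]
          have e1 : (Cδ * h^2) * (c / (2 * (Cδ + 1))) = (Cδ * (c / (2 * (Cδ + 1)))) * h^2 := by
            ring
          have e2 : (c / (2 * (I2 + 1)) * h^2) * I2 = (c / (2 * (I2 + 1)) * I2) * h^2 := by
            ring
          rw [e1, e2]
          have hsq : (0:ℝ) ≤ h^2 := sq_nonneg h
          nlinarith [mul_le_mul_of_nonneg_right k1 hsq, mul_le_mul_of_nonneg_right k2 hsq]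
      _ = c * h^2 := by ring
    calc ‖∫ u, K u * φ (-(h*u))‖ ≤ c * h^2 := hfinal
    _ = c * ‖h^2‖ := by rw [Real.norm_eq_abs, abs_of_nonneg (sq_nonneg h)]
  -- conclude
  have hcongr : (fun h : ℝ =>
      (∫ ω, (1 / h) * (∫ z in Set.Ioi (gInv t), K ((z - gInv (X ω)) / h)) ∂μ)
        - survival μ X t + h ^ 2 / 2 *
          (deriv (deriv g) (gInv t) * fX t + (deriv g (gInv t)) ^ 2 * deriv fX t) *
          ∫ y, y ^ 2 * K y)
      =ᶠ[nhdsWithin (0 : ℝ) (Set.Ioi 0)] fun h : ℝ => ∫ u, K u * φ (-(h*u)) := by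
    filter_upwards [self_mem_nhdsWithin] with h hh
    exact hmain h hh
  exact hG.congr' hcongr.symm EventuallyEq.rfl
end

section
/- Fix t ∈ Ω. Under conditions C1–C6, the single-observation variance of the first proposed survival function estimator, namely n · Var[S̃_{X,1}(t)] = E[V_{1,h}(g⁻¹(t), g⁻¹(X))²] − (E[V_{1,h}(g⁻¹(t), g⁻¹(X))])² where V_{1,h}(x, y) = (1/h) ∫_x^{∞} K((z − y)/h) dz, satisfies, as h → 0⁺: n · Var[S̃_{X,1}(t)] = S_X(t) F_X(t) − h g′(g⁻¹(t)) f_X(t) ∫_{−∞}^{∞} V(y) W(y) dy + o(h), where F_X = 1 − S_X. -/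
open MeasureTheory Filter Asymptotics
open scoped ENNReal NNReal Topology

open Set

set_option linter.unusedVariables false
set_option maxHeartbeats 1000000

section Kernel

variable {K : ℝ → ℝ} (hKc : Continuous K) (hK0 : ∀ x, 0 ≤ K x)
  (hK1 : (∫ x, K x) = 1)

lemma K_integrable (hK1 : (∫ x, K x) = 1) : Integrable K := by
  by_contra h
  rw [integral_undef h] at hK1
  norm_num at hK1

lemma kerV_add_kerW (hKi : Integrable K) (s : ℝ) : kerV K s + kerW K s = ∫ x, K x := by
  have := integral_add_compl (measurableSet_Iic (a := s)) hKi
  rw [compl_Iic] at this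
  rw [kerV, kerW, ← this]; ring

lemma kerV_nonneg (hK0 : ∀ x, 0 ≤ K x) (s : ℝ) : 0 ≤ kerV K s :=
  setIntegral_nonneg measurableSet_Ioi fun x _ => hK0 x

lemma kerW_nonneg (hK0 : ∀ x, 0 ≤ K x) (s : ℝ) : 0 ≤ kerW K s :=
  setIntegral_nonneg measurableSet_Iic fun x _ => hK0 x

lemma kerV_le_one (hKi : Integrable K) (hK0 : ∀ x, 0 ≤ K x) (hK1 : (∫ x, K x) = 1)
    (s : ℝ) : kerV K s ≤ 1 := by
  have h := kerV_add_kerW hKi s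
  rw [hK1] at h
  have := kerW_nonneg hK0 s
  linarith

lemma kerW_le_one (hKi : Integrable K) (hK0 : ∀ x, 0 ≤ K x) (hK1 : (∫ x, K x) = 1)
    (s : ℝ) : kerW K s ≤ 1 := by
  have h := kerV_add_kerW hKi s
  rw [hK1] at h
  have := kerV_nonneg hK0 s
  linarith

lemma kerW_continuous (hKc : Continuous K) (hKi : Integrable K) : Continuous (kerW K) := by
  have heq : ∀ s, kerW K s = kerW K 0 + ∫ x in (0:ℝ)..s, K x := by
    intro s
    have := intervalIntegral.integral_Iic_sub_Iic (hKi.integrableOn (s := Iic (0:ℝ))) (hKi.integrableOn (s := Iic s))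
    rw [kerW, kerW]
    linarith [this]
  have : Continuous fun s => kerW K 0 + ∫ x in (0:ℝ)..s, K x :=
    continuous_const.add (intervalIntegral.continuous_primitive
      (fun a b => hKi.intervalIntegrable) 0)
  exact this.congr (fun s => (heq s).symm)

lemma kerV_continuous (hKc : Continuous K) (hKi : Integrable K) : Continuous (kerV K) := by
  have : Continuous fun s => (∫ x, K x) - kerW K s :=
    continuous_const.sub (kerW_continuous hKc hKi)
  refine this.congr fun s => ?_
  have := kerV_add_kerW hKi s
  linarith

lemma kerW_eq_kerV_neg (hKs : ∀ x, K (-x) = K x) (u : ℝ) : kerW K u = kerV K (-u) := by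
  rw [kerV]
  have : ∀ z, K z = K (-z) := fun z => (hKs z).symm
  rw [show (∫ z in Ioi (-u), K z) = ∫ z in Ioi (-u), K (-z) from
    setIntegral_congr_fun measurableSet_Ioi (fun z _ => this z)]
  rw [integral_comp_neg_Ioi, neg_neg, kerW]

lemma kerV_le_div_sq (hKi : Integrable K) (hK0 : ∀ x, 0 ≤ K x)
    (hmom : Integrable (fun x => x ^ 2 * K x)) {u : ℝ} (hu : 0 < u) :
    kerV K u ≤ (∫ x, x ^ 2 * K x) / u ^ 2 := by
  have h1 : kerV K u ≤ ∫ x in Ioi u, (x ^ 2 / u ^ 2) * K x := by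
    refine setIntegral_mono_on (hKi.integrableOn) ?_ measurableSet_Ioi ?_
    · have : (fun x : ℝ => (x ^ 2 / u ^ 2) * K x) = fun x => (x ^ 2 * K x) / u ^ 2 := by
        funext x; ring
      rw [this]
      exact (hmom.integrableOn).div_const (u ^ 2)
    · intro x hx
      have hx' : u ≤ x := le_of_lt hx
      have : (1 : ℝ) ≤ x ^ 2 / u ^ 2 := by
        rw [le_div_iff₀ (by positivity)]
        nlinarith
      nlinarith [hK0 x, this]
  have h2 : ∫ x in Ioi u, (x ^ 2 / u ^ 2) * K x ≤ ∫ x, (x ^ 2 / u ^ 2) * K x := by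
    refine setIntegral_le_integral ?_ ?_
    · have : (fun x : ℝ => (x ^ 2 / u ^ 2) * K x) = fun x => (x ^ 2 * K x) / u ^ 2 := by
        funext x; ring
      rw [this]
      exact hmom.div_const (u ^ 2)
    · filter_upwards with x
      exact mul_nonneg (by positivity) (hK0 x)
  have h3 : (∫ x, (x ^ 2 / u ^ 2) * K x) = (∫ x, x ^ 2 * K x) / u ^ 2 := by
    rw [← integral_div]
    congr 1; ext x; ring
  linarith

end Kernel

section Int
variable {K : ℝ → ℝ}

lemma ae_ne_zero : ∀ᵐ u : ℝ, u ≠ 0 := by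
  rw [ae_iff]
  have : {u : ℝ | ¬ u ≠ 0} = {0} := by ext u; simp
  rw [this]
  exact measure_singleton 0

lemma intF (hK0 : ∀ x, 0 ≤ K x) (hVcont : Continuous (kerV K))
    (hV0 : ∀ s, 0 ≤ kerV K s) (hV1 : ∀ s, kerV K s ≤ 1)
    (hVle : ∀ u : ℝ, 0 < u → kerV K u ≤ (∫ x, x ^ 2 * K x) / u ^ 2) :
    Integrable ((Ioi (0:ℝ)).indicator (kerV K)) := by
  set c := ∫ x, x ^ 2 * K x with hc
  have hc0 : 0 ≤ c := integral_nonneg fun x => mul_nonneg (by positivity) (hK0 x)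
  refine Integrable.mono' (g := fun u => (1 + c) * (1 + u ^ 2)⁻¹)
    (integrable_inv_one_add_sq.const_mul _) ?_ ?_
  · exact (hVcont.measurable.indicator measurableSet_Ioi).aestronglyMeasurable
  · filter_upwards with u
    by_cases hu : u ∈ Ioi (0:ℝ)
    · rw [indicator_of_mem hu, Real.norm_eq_abs, abs_of_nonneg (hV0 u)]
      rw [show ((1:ℝ)+c) * (1+u^2)⁻¹ = (1+c)/(1+u^2) by ring,
        le_div_iff₀ (by positivity)]
      have h1 := hV1 u
      have h2 := hVle u hu
      have h3 := hV0 u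
      have : kerV K u * u ^ 2 ≤ c := by
        rw [← le_div_iff₀ (pow_pos (mem_Ioi.mp hu) 2)]
        exact h2
      nlinarith
    · rw [indicator_of_notMem hu, norm_zero]
      positivity

lemma Gfun (hWV : ∀ u, kerW K u = kerV K (-u)) :
    (Iio (0:ℝ)).indicator (kerW K) = fun u => (Ioi (0:ℝ)).indicator (kerV K) (-u) := by
  funext u
  by_cases hu : u < 0
  · rw [indicator_of_mem (show u ∈ Iio (0:ℝ) from hu),
      indicator_of_mem (show -u ∈ Ioi (0:ℝ) by simpa using hu), hWV]
  · rw [indicator_of_notMem (by simpa using hu),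
      indicator_of_notMem (show -u ∉ Ioi (0:ℝ) by simpa using hu)]

lemma intG (hF : Integrable ((Ioi (0:ℝ)).indicator (kerV K)))
    (hWV : ∀ u, kerW K u = kerV K (-u)) :
    Integrable ((Iio (0:ℝ)).indicator (kerW K)) := by
  rw [Gfun hWV]
  exact hF.comp_neg

lemma intFG (hWV : ∀ u, kerW K u = kerV K (-u)) :
    (∫ u, (Iio (0:ℝ)).indicator (kerW K) u) = ∫ u, (Ioi (0:ℝ)).indicator (kerV K) u := by
  rw [Gfun hWV]
  exact integral_neg_eq_self _ volume

/-- `D u = kerV u - 1_{u<0}` -/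
noncomputable def Dfun (K : ℝ → ℝ) : ℝ → ℝ := fun u => kerV K u - (Iio (0:ℝ)).indicator 1 u

lemma D_ae_eq (hVW : ∀ s, kerV K s + kerW K s = 1) : Dfun K =ᵐ[volume]
    (fun u => (Ioi (0:ℝ)).indicator (kerV K) u - (Iio (0:ℝ)).indicator (kerW K) u) := by
  filter_upwards [ae_ne_zero] with u hu
  rcases lt_or_gt_of_ne hu with h | h
  · rw [Dfun, indicator_of_mem (show u ∈ Iio (0:ℝ) from h),
      indicator_of_notMem (show u ∉ Ioi (0:ℝ) by simp [le_of_lt h]),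
      indicator_of_mem (show u ∈ Iio (0:ℝ) from h)]
    have := hVW u
    simp only [Pi.one_apply]
    linarith
  · rw [Dfun, indicator_of_notMem (show u ∉ Iio (0:ℝ) by simp [le_of_lt h]),
      indicator_of_mem (show u ∈ Ioi (0:ℝ) from h),
      indicator_of_notMem (show u ∉ Iio (0:ℝ) by simp [le_of_lt h])]

lemma intD (hF : Integrable ((Ioi (0:ℝ)).indicator (kerV K)))
    (hVW : ∀ s, kerV K s + kerW K s = 1) (hWV : ∀ u, kerW K u = kerV K (-u)) :
    Integrable (Dfun K) :=
  Integrable.congr (hF.sub (intG hF hWV)) (D_ae_eq hVW).symm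

lemma intD_zero (hF : Integrable ((Ioi (0:ℝ)).indicator (kerV K)))
    (hVW : ∀ s, kerV K s + kerW K s = 1) (hWV : ∀ u, kerW K u = kerV K (-u)) :
    (∫ u, Dfun K u) = 0 := by
  rw [integral_congr_ae (D_ae_eq hVW),
    integral_sub hF (intG hF hWV), intFG hWV]
  ring

lemma intVW (hF : Integrable ((Ioi (0:ℝ)).indicator (kerV K)))
    (hVcont : Continuous (kerV K)) (hWcont : Continuous (kerW K))
    (hV0 : ∀ s, 0 ≤ kerV K s) (hV1 : ∀ s, kerV K s ≤ 1)
    (hW0 : ∀ s, 0 ≤ kerW K s) (hW1 : ∀ s, kerW K s ≤ 1)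
    (hWV : ∀ u, kerW K u = kerV K (-u)) :
    Integrable (fun u => kerV K u * kerW K u) := by
  refine Integrable.mono' (hF.add (intG hF hWV))
    ((hVcont.mul hWcont).aestronglyMeasurable) ?_
  filter_upwards [ae_ne_zero] with u hu
  rcases lt_or_gt_of_ne hu with h | h
  · rw [Pi.add_apply, indicator_of_mem (show u ∈ Iio (0:ℝ) from h),
      indicator_of_notMem (show u ∉ Ioi (0:ℝ) by simp [le_of_lt h])]
    rw [Real.norm_eq_abs, abs_of_nonneg (mul_nonneg (hV0 u) (hW0 u))]
    nlinarith [hV0 u, hV1 u, hW0 u, hW1 u]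
  · rw [Pi.add_apply, indicator_of_notMem (show u ∉ Iio (0:ℝ) by simp [le_of_lt h]),
      indicator_of_mem (show u ∈ Ioi (0:ℝ) from h)]
    rw [Real.norm_eq_abs, abs_of_nonneg (mul_nonneg (hV0 u) (hW0 u))]
    nlinarith [hV0 u, hV1 u, hW0 u, hW1 u]

end Int

/-- A nonneg `C²` function with integral at most 1 and second derivative bounded by `C`
is bounded by `(1+C)/2`. -/
lemma density_bound (f : ℝ → ℝ) (hf : ContDiff ℝ 2 f) (h0 : ∀ y, 0 ≤ f y)
    (hint : Integrable f) (hI : (∫ y, f y) ≤ 1) (C : ℝ)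
    (hC : ∀ y, |deriv (deriv f) y| ≤ C) : ∀ y, f y ≤ (1 + C) / 2 := by
  have hC0 : 0 ≤ C := le_trans (abs_nonneg _) (hC 0)
  have h2 : ContDiff ℝ 2 f := hf
  have hd1 : Differentiable ℝ f := hf.differentiable (by norm_num)
  have hd2' : ContDiff ℝ 1 (deriv f) := by
    have := (contDiff_succ_iff_deriv (n := 1)).mp (by exact_mod_cast hf)
    exact this.2.2
  have hd2 : Differentiable ℝ (deriv f) := hd2'.differentiable (by norm_num)
  intro y₀
  -- the symmetrized function
  set q : ℝ → ℝ := fun s => f (y₀ + s) + f (y₀ - s) - 2 * f y₀ + C * s ^ 2 with hq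
  set q' : ℝ → ℝ := fun s => deriv f (y₀ + s) - deriv f (y₀ - s) + C * (2 * s) with hq'
  have hdq : ∀ s, HasDerivAt q (q' s) s := by
    intro s
    have h1 : HasDerivAt (fun s : ℝ => f (y₀ + s)) (deriv f (y₀ + s)) s := by
      simpa [Function.comp_def] using ((hd1 (y₀ + s)).hasDerivAt.comp s ((hasDerivAt_id s).const_add y₀))
    have h2 : HasDerivAt (fun s : ℝ => f (y₀ - s)) (-deriv f (y₀ - s)) s := by
      simpa [Function.comp_def] using ((hd1 (y₀ - s)).hasDerivAt.comp s ((hasDerivAt_id s).neg.const_add y₀))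
    have h3 : HasDerivAt (fun s : ℝ => C * s ^ 2) (C * (2 * s)) s := by
      simpa using ((hasDerivAt_pow 2 s).const_mul C)
    have := ((h1.add h2).sub_const (2 * f y₀)).add h3
    convert this using 1 <;> first | rfl | ring
  have hdq' : ∀ s, HasDerivAt q'
      (deriv (deriv f) (y₀ + s) + deriv (deriv f) (y₀ - s) + C * 2) s := by
    intro s
    have h1 : HasDerivAt (fun s : ℝ => deriv f (y₀ + s)) (deriv (deriv f) (y₀ + s)) s := by
      simpa [Function.comp_def] using ((hd2 (y₀ + s)).hasDerivAt.comp s ((hasDerivAt_id s).const_add y₀))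
    have h2 : HasDerivAt (fun s : ℝ => deriv f (y₀ - s)) (-(deriv (deriv f) (y₀ - s))) s := by
      simpa [Function.comp_def] using ((hd2 (y₀ - s)).hasDerivAt.comp s ((hasDerivAt_id s).neg.const_add y₀))
    have h3 : HasDerivAt (fun s : ℝ => C * (2 * s)) (C * 2) s := by
      simpa using (((hasDerivAt_id s).const_mul (2:ℝ)).const_mul C)
    have := (h1.sub h2).add h3
    convert this using 1 <;> first | rfl | ring
  have hq'mono : Monotone q' := by
    refine monotone_of_deriv_nonneg (fun s => (hdq' s).differentiableAt) (fun s => ?_)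
    rw [(hdq' s).deriv]
    have := hC (y₀ + s); have := hC (y₀ - s)
    have h1 : -C ≤ deriv (deriv f) (y₀ + s) := neg_le_of_abs_le (hC _)
    have h2 : -C ≤ deriv (deriv f) (y₀ - s) := neg_le_of_abs_le (hC _)
    linarith
  have hq'0 : q' 0 = 0 := by simp [hq']
  have hqmono : MonotoneOn q (Ici (0:ℝ)) := by
    refine monotoneOn_of_deriv_nonneg (convex_Ici 0)
      (Continuous.continuousOn (by
        have : Continuous q := by
          apply Continuous.add
          · exact ((hf.continuous.comp (continuous_const.add continuous_id)).add
              (hf.continuous.comp (continuous_const.sub continuous_id))).sub continuous_const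
          · exact continuous_const.mul (continuous_pow 2)
        exact this))
      (fun s _ => (hdq s).differentiableAt.differentiableWithinAt) ?_
    intro s hs
    rw [(hdq s).deriv]
    have : (0:ℝ) ≤ s := le_of_lt (by simpa [interior_Ici] using hs)
    calc (0:ℝ) = q' 0 := hq'0.symm
    _ ≤ q' s := hq'mono this
  have hq0 : q 0 = 0 := by simp [hq]; ring
  have hkey : ∀ s ∈ Icc (0:ℝ) 1, 2 * f y₀ - C ≤ f (y₀ + s) + f (y₀ - s) := by
    intro s hs
    have h1 : (0:ℝ) ≤ q s := by
      rw [← hq0]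
      exact hqmono (self_mem_Ici) (mem_Ici.mpr hs.1) hs.1
    have hs2 : s ^ 2 ≤ 1 := by nlinarith [hs.1, hs.2]
    have : C * s ^ 2 ≤ C := by nlinarith
    simp only [hq] at h1
    linarith
  -- integrate over [0,1]
  have hfc : Continuous f := hf.continuous
  have hInt1 : IntervalIntegrable (fun s => f (y₀ + s) + f (y₀ - s)) volume 0 1 :=
    (Continuous.intervalIntegrable (by continuity) 0 1)
  have hmono := intervalIntegral.integral_mono_on (by norm_num : (0:ℝ) ≤ 1)
    (intervalIntegrable_const) hInt1 hkey
  rw [intervalIntegral.integral_const] at hmono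
  simp only [smul_eq_mul, sub_zero, one_mul] at hmono
  -- identify the integral
  have hsplit : (∫ s in (0:ℝ)..1, (f (y₀ + s) + f (y₀ - s)))
      = (∫ x in y₀..(y₀+1), f x) + ∫ x in (y₀-1)..y₀, f x := by
    rw [intervalIntegral.integral_add
      (Continuous.intervalIntegrable (by continuity) 0 1)
      (Continuous.intervalIntegrable (by continuity) 0 1)]
    congr 1
    · simpa using intervalIntegral.integral_comp_add_left f y₀ (a := 0) (b := 1)
    · have := intervalIntegral.integral_comp_sub_left f y₀ (a := 0) (b := 1)
      simpa using this
  have hjoin : (∫ x in (y₀-1)..y₀, f x) + (∫ x in y₀..(y₀+1), f x)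
      = ∫ x in (y₀-1)..(y₀+1), f x :=
    intervalIntegral.integral_add_adjacent_intervals
      (hint.intervalIntegrable) (hint.intervalIntegrable)
  have hle1 : (∫ x in (y₀-1)..(y₀+1), f x) ≤ 1 := by
    rw [intervalIntegral.integral_of_le (by linarith)]
    calc (∫ x in Ioc (y₀-1) (y₀+1), f x) ≤ ∫ x, f x :=
      setIntegral_le_integral hint (Filter.Eventually.of_forall h0)
    _ ≤ 1 := hI
  linarith [hmono, hsplit, hjoin, hle1]

/-- change of variables `z = h*u + y` on `Ioi`. -/
lemma stepI {K : ℝ → ℝ} (x₀ y h : ℝ) (hh : 0 < h) :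
    (∫ z in Ioi x₀, K ((z - y) / h)) = h * (∫ u in Ioi ((x₀ - y)/h), K u) := by
  have himg : (fun u : ℝ => h * u + y) '' Ioi ((x₀ - y)/h) = Ioi x₀ := by
    ext z
    simp only [mem_image, mem_Ioi]
    constructor
    · rintro ⟨u, hu, rfl⟩
      have : x₀ - y < h * u := by
        rw [div_lt_iff₀ hh] at hu; linarith [hu]
      linarith
    · intro hz
      refine ⟨(z - y)/h, ?_, by field_simp; ring⟩
      rw [div_lt_iff₀ hh, div_mul_cancel₀ _ (ne_of_gt hh)]
      linarith
  have hder : ∀ u ∈ Ioi ((x₀ - y)/h),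
      HasDerivWithinAt (fun u : ℝ => h * u + y) h (Ioi ((x₀ - y)/h)) u := by
    intro u _
    have huu : HasDerivAt (fun u : ℝ => h * u + y) h u := by
      simpa using (((hasDerivAt_id u).const_mul h).add_const y)
    exact huu.hasDerivWithinAt
  have hinj : InjOn (fun u : ℝ => h * u + y) (Ioi ((x₀ - y)/h)) := by
    intro a _ b _ hab
    simp only at hab
    exact mul_left_cancel₀ (ne_of_gt hh) (by linarith)
  have := integral_image_eq_integral_abs_deriv_smul (f' := fun _ => h)
    measurableSet_Ioi hder hinj (fun z => K ((z - y)/h))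
  rw [himg] at this
  rw [this]
  rw [← integral_const_mul]
  congr 1
  funext u
  rw [smul_eq_mul, abs_of_pos hh]
  congr 2
  field_simp
  ring

/-- change of variables `y = x₀ - h*u` on the whole line. -/
lemma subst_affine (F : ℝ → ℝ) (x₀ h : ℝ) (hh : 0 < h) :
    (∫ y, F y) = h * ∫ u, F (x₀ - h * u) := by
  have hsurj : (fun u : ℝ => x₀ - h * u) '' univ = univ := by
    rw [image_univ]
    refine range_eq_univ.mpr fun y => ⟨(x₀ - y)/h, by field_simp; ring⟩
  have hder : ∀ u ∈ (univ : Set ℝ),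
      HasDerivWithinAt (fun u : ℝ => x₀ - h * u) (-h) (univ : Set ℝ) u := by
    intro u _
    have huu : HasDerivAt (fun u : ℝ => x₀ - h * u) (-h) u := by
      simpa using (((hasDerivAt_id u).const_mul h).const_sub x₀)
    exact huu.hasDerivWithinAt
  have hinj : InjOn (fun u : ℝ => x₀ - h * u) (univ : Set ℝ) := by
    intro a _ b _ hab
    simp only at hab
    exact mul_left_cancel₀ (ne_of_gt hh) (by linarith)
  have := integral_image_eq_integral_abs_deriv_smul (f' := fun _ => -h)
    MeasurableSet.univ hder hinj F
  rw [hsurj] at this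
  rw [show (∫ y, F y) = ∫ y in univ, F y by rw [setIntegral_univ], this,
    setIntegral_univ, ← integral_const_mul]
  congr 1
  funext u
  rw [smul_eq_mul, abs_of_neg (by linarith : -h < 0), neg_neg]


/-- Variance expansion of the first proposed survival function estimator:
with `V_{1,h}(x,y) = (1/h) ∫_x^∞ K((z−y)/h) dz`, as `h → 0⁺`,
`n·Var[S̃_{X,1}(t)] = E[V_{1,h}(g⁻¹t, g⁻¹X)²] − (E[V_{1,h}(g⁻¹t, g⁻¹X)])²`
equals `S_X(t) F_X(t) − h g′(g⁻¹t) f_X(t) ∫ V(y) W(y) dy + o(h)`. -/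
theorem var_survival_estimator_one
    {α : Type*} [MeasurableSpace α] (μ : Measure α) [IsProbabilityMeasure μ]
    -- C1: the kernel
    (K : ℝ → ℝ) (hK_cont : Continuous K) (hK_nonneg : ∀ x, 0 ≤ K x)
    (hK_symm : ∀ x, K (-x) = K x) (hK_one : (∫ x, K x) = 1)
    (hK_mom2 : Integrable (fun x => x ^ 2 * K x))
    -- C3, C4: the transformation
    (Ω : Set ℝ) (hΩ : Set.OrdConnected Ω)
    (g gInv fX : ℝ → ℝ)
    (hg_smooth : ContDiff ℝ 2 g) (hg_mono : StrictMono g)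
    (hg_range : Set.range g = Ω)
    (hgInv_left : Function.LeftInverse gInv g)
    (hgInv_right : ∀ s ∈ Ω, g (gInv s) = s)
    (hgInv_meas : Measurable gInv)
    -- the random variable and its density
    (X : α → ℝ) (hX : Measurable X) (hXΩ : ∀ᵐ ω ∂μ, X ω ∈ Ω)
    (hfX_smooth : ContDiff ℝ 2 fX) (hfX_nonneg : ∀ x, 0 ≤ fX x)
    (hdens : μ.map X = volume.withDensity (fun x => ENNReal.ofReal (fX x)))
    -- C4: the density f_Y(y) = g′(y) f_X(g(y)) of Y = g⁻¹(X) is twice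
    -- continuously differentiable with bounded second derivative
    (hfY_smooth : ContDiff ℝ 2 (fun y => deriv g y * fX (g y)))
    (hfY_bdd : ∃ C : ℝ, ∀ y,
      |deriv (deriv (fun z => deriv g z * fX (g z))) y| ≤ C)
    -- C5
    (hgK : ∃ ε > (0 : ℝ), ∀ u : ℝ, |u| < ε →
      Integrable (fun x => deriv g (u * x) * K x))
    (hgV : ∃ ε > (0 : ℝ), ∀ u : ℝ, |u| < ε →
      Integrable (fun x => deriv g (u * x) * kerV K x))
    -- C6: moments
    (hM1 : Integrable X μ) (hM2 : Integrable (fun ω => (X ω) ^ 2) μ)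
    (hM3 : Integrable (fun ω => (X ω) ^ 3) μ)
    -- the point of evaluation
    (t : ℝ) (ht : t ∈ Ω)
    :
    (fun h : ℝ =>
        (∫ ω, ((1 / h) *
            ∫ z in Set.Ioi (gInv t), K ((z - gInv (X ω)) / h)) ^ 2 ∂μ)
          - (∫ ω, (1 / h) *
              (∫ z in Set.Ioi (gInv t), K ((z - gInv (X ω)) / h)) ∂μ) ^ 2
          - (survival μ X t * (1 - survival μ X t)
              - h * deriv g (gInv t) * fX t * ∫ y, kerV K y * kerW K y))
      =o[nhdsWithin (0 : ℝ) (Set.Ioi 0)] (fun h => h) := by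
  classical
  set x₀ := gInv t with hx₀def
  set S := survival μ X t with hSdef
  set fY : ℝ → ℝ := fun y => deriv g y * fX (g y) with hfYdef
  -- kernel facts
  have hKi : Integrable K := K_integrable hK_one
  have hVcont : Continuous (kerV K) := kerV_continuous hK_cont hKi
  have hWcont : Continuous (kerW K) := kerW_continuous hK_cont hKi
  have hV0 : ∀ s, 0 ≤ kerV K s := kerV_nonneg hK_nonneg
  have hV1 : ∀ s, kerV K s ≤ 1 := kerV_le_one hKi hK_nonneg hK_one
  have hW0 : ∀ s, 0 ≤ kerW K s := kerW_nonneg hK_nonneg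
  have hW1 : ∀ s, kerW K s ≤ 1 := kerW_le_one hKi hK_nonneg hK_one
  have hVW1 : ∀ s, kerV K s + kerW K s = 1 := fun s => by
    rw [kerV_add_kerW hKi s, hK_one]
  have hWV : ∀ u, kerW K u = kerV K (-u) := kerW_eq_kerV_neg hK_symm
  have hVle : ∀ u : ℝ, 0 < u → kerV K u ≤ (∫ x, x ^ 2 * K x) / u ^ 2 :=
    fun u hu => kerV_le_div_sq hKi hK_nonneg hK_mom2 hu
  have hF : Integrable ((Ioi (0:ℝ)).indicator (kerV K)) :=
    intF hK_nonneg hVcont hV0 hV1 hVle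
  have hDint : Integrable (Dfun K) := intD hF hVW1 hWV
  have hD0 : (∫ u, Dfun K u) = 0 := intD_zero hF hVW1 hWV
  have hVWint : Integrable (fun u => kerV K u * kerW K u) :=
    intVW hF hVcont hWcont hV0 hV1 hW0 hW1 hWV
  have hDmeas : Measurable (Dfun K) :=
    hVcont.measurable.sub ((measurable_const (a := (1:ℝ))).indicator measurableSet_Iio)
  have hVWmeas : Measurable (fun u => kerV K u * kerW K u) :=
    (hVcont.mul hWcont).measurable
  -- transformation facts
  have hg_diff : Differentiable ℝ g := hg_smooth.differentiable (by norm_num)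
  have hg'0 : ∀ y, 0 ≤ deriv g y := by
    intro y
    have hder := (hg_diff y).hasDerivAt
    rw [hasDerivAt_iff_tendsto_slope] at hder
    have hsub : Ioi y ⊆ {y}ᶜ := fun z hz => ne_of_gt hz
    have hder' := hder.mono_left (nhdsWithin_mono _ hsub)
    refine ge_of_tendsto hder' ?_
    filter_upwards [self_mem_nhdsWithin] with z hz
    have h1 : y < z := hz
    have h2 : g y ≤ g z := le_of_lt (hg_mono h1)
    rw [slope_def_field]
    exact div_nonneg (by linarith) (by linarith)
  have hΩopen : IsOpen Ω := by
    rw [isOpen_iff_mem_nhds]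
    intro x hx
    have hx' : x ∈ range g := by rw [hg_range]; exact hx
    obtain ⟨y, rfl⟩ := hx'
    have h1 : g (y - 1) < g y := hg_mono (by linarith)
    have h2 : g y < g (y + 1) := hg_mono (by linarith)
    have hsub : Icc (g (y - 1)) (g (y + 1)) ⊆ Ω :=
      hΩ.out (by rw [← hg_range]; exact mem_range_self _)
        (by rw [← hg_range]; exact mem_range_self _)
    exact Filter.mem_of_superset (Ioo_mem_nhds h1 h2)
      (fun z hz => hsub (Ioo_subset_Icc_self hz))
  have hΩmeas : MeasurableSet Ω := hΩopen.measurableSet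
  have hgx₀ : g x₀ = t := hgInv_right t ht
  -- fX facts
  have hfXmeas : Measurable fX := hfX_smooth.continuous.measurable
  have hmap1 : (μ.map X) univ = 1 := by
    rw [Measure.map_apply hX MeasurableSet.univ]
    simp
  have hlint : (∫⁻ x, ENNReal.ofReal (fX x)) = 1 := by
    rw [hdens, withDensity_apply _ MeasurableSet.univ] at hmap1
    simpa using hmap1
  have hfXint : Integrable fX := by
    constructor
    · exact hfXmeas.aestronglyMeasurable
    · rw [hasFiniteIntegral_iff_ofReal (Filter.Eventually.of_forall hfX_nonneg), hlint]
      exact ENNReal.one_lt_top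
  have hfXI : (∫ x, fX x) = 1 := by
    rw [integral_eq_lintegral_of_nonneg_ae (Filter.Eventually.of_forall hfX_nonneg)
      hfXmeas.aestronglyMeasurable, hlint]
    simp
  -- fY facts
  have hfYc : Continuous fY := hfY_smooth.continuous
  have hfY0 : ∀ y, 0 ≤ fY y := fun y => mul_nonneg (hg'0 y) (hfX_nonneg (g y))
  have hfYx₀ : fY x₀ = deriv g x₀ * fX t := by
    rw [hfYdef]
    simp only
    rw [hgx₀]
  -- change of variables x = g y
  have himage : ∀ G : ℝ → ℝ, (∫ x in Ω, G x * fX x) = ∫ y, G (g y) * fY y := by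
    intro G
    have h1 : Ω = g '' univ := by rw [image_univ, hg_range]
    rw [h1, integral_image_eq_integral_abs_deriv_smul MeasurableSet.univ
      (fun y _ => ((hg_diff y).hasDerivAt).hasDerivWithinAt)
      hg_mono.injective.injOn (fun x => G x * fX x), setIntegral_univ]
    refine integral_congr_ae (Filter.Eventually.of_forall fun y => ?_)
    simp only [smul_eq_mul, hfYdef]
    rw [abs_of_nonneg (hg'0 y)]
    ring
  have hae0 : ∀ᵐ x : ℝ, x ∉ Ω → fX x = 0 := by
    have h1 : ∀ᵐ y ∂(μ.map X), y ∈ Ω := (ae_map_iff hX.aemeasurable hΩmeas).mpr hXΩ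
    rw [hdens] at h1
    have h2 := (ae_withDensity_iff (ENNReal.measurable_ofReal.comp hfXmeas)).mp h1
    filter_upwards [h2] with x hx hxΩ
    by_contra hne
    have hpos : (0:ℝ) < fX x := lt_of_le_of_ne (hfX_nonneg x) (Ne.symm hne)
    refine hxΩ (hx ?_)
    simp only [Function.comp_apply, ne_eq, ENNReal.ofReal_eq_zero, not_le]
    exact hpos
  have hdrop : ∀ G : ℝ → ℝ, (∫ x, G x * fX x) = ∫ x in Ω, G x * fX x := by
    intro G
    rw [← integral_indicator hΩmeas]
    refine integral_congr_ae ?_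
    filter_upwards [hae0] with x hx
    by_cases hxΩ : x ∈ Ω
    · rw [indicator_of_mem hxΩ]
    · rw [indicator_of_notMem hxΩ, hx hxΩ, mul_zero]
  have hfYint : Integrable fY := by
    have h1 : IntegrableOn fX (g '' univ) := hfXint.integrableOn
    rw [integrableOn_image_iff_integrableOn_abs_deriv_smul MeasurableSet.univ
      (fun y _ => ((hg_diff y).hasDerivAt).hasDerivWithinAt)
      hg_mono.injective.injOn fX, integrableOn_univ] at h1
    refine h1.congr (Filter.Eventually.of_forall fun y => ?_)
    simp only [smul_eq_mul, hfYdef]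
    rw [abs_of_nonneg (hg'0 y)]
  have hfYI : (∫ y, fY y) = 1 := by
    calc (∫ y, fY y) = ∫ y, (fun _ : ℝ => (1:ℝ)) (g y) * fY y := by
          refine integral_congr_ae (Filter.Eventually.of_forall fun y => ?_)
          simp
      _ = ∫ x in Ω, (fun _ : ℝ => (1:ℝ)) x * fX x := (himage (fun _ : ℝ => (1:ℝ))).symm
      _ = ∫ x, (fun _ : ℝ => (1:ℝ)) x * fX x := (hdrop (fun _ : ℝ => (1:ℝ))).symm
      _ = 1 := by simpa using hfXI
  obtain ⟨C, hC⟩ := hfY_bdd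
  have hM : ∀ y, fY y ≤ (1 + C) / 2 :=
    density_bound fY hfY_smooth hfY0 hfYint (le_of_eq hfYI) C hC
  -- the key integral representation
  have key : ∀ (Ψ : ℝ → ℝ), Measurable Ψ → ∀ h : ℝ, 0 < h →
      (∫ ω, Ψ ((x₀ - gInv (X ω)) / h) ∂μ) = h * ∫ u, Ψ u * fY (x₀ - h * u) := by
    intro Ψ hΨ h hh
    have hmeas1 : Measurable fun x : ℝ => Ψ ((x₀ - gInv x) / h) :=
      hΨ.comp ((measurable_const.sub hgInv_meas).div_const h)
    have s1 : (∫ ω, Ψ ((x₀ - gInv (X ω)) / h) ∂μ)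
        = ∫ x, Ψ ((x₀ - gInv x) / h) ∂(μ.map X) :=
      (integral_map hX.aemeasurable hmeas1.aestronglyMeasurable).symm
    rw [s1, hdens,
      show (fun x => ENNReal.ofReal (fX x)) = (fun x => ((fX x).toNNReal : ℝ≥0∞)) from rfl,
      integral_withDensity_eq_integral_smul hfXmeas.real_toNNReal]
    have s2 : (∫ x, (fX x).toNNReal • Ψ ((x₀ - gInv x) / h))
        = ∫ x, (fun z => Ψ ((x₀ - gInv z) / h)) x * fX x := by
      refine integral_congr_ae (Filter.Eventually.of_forall fun x => ?_)
      show (fX x).toNNReal • Ψ ((x₀ - gInv x) / h) = Ψ ((x₀ - gInv x) / h) * fX x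
      rw [NNReal.smul_def, Real.coe_toNNReal _ (hfX_nonneg x), smul_eq_mul]
      ring
    rw [s2, hdrop, himage]
    have s3 : (∫ y, (fun z => Ψ ((x₀ - gInv z) / h)) (g y) * fY y)
        = ∫ y, Ψ ((x₀ - y) / h) * fY y := by
      refine integral_congr_ae (Filter.Eventually.of_forall fun y => ?_)
      simp only
      rw [hgInv_left y]
    rw [s3, subst_affine (fun y => Ψ ((x₀ - y) / h) * fY y) x₀ h hh]
    congr 1
    refine integral_congr_ae (Filter.Eventually.of_forall fun u => ?_)
    simp only
    rw [show (x₀ - (x₀ - h * u)) / h = u by field_simp; ring]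
  -- dominated convergence
  have hdct : ∀ (Ψ : ℝ → ℝ), Measurable Ψ → Integrable Ψ →
      Tendsto (fun h : ℝ => ∫ u, Ψ u * fY (x₀ - h * u)) (nhdsWithin (0:ℝ) (Ioi 0))
        (𝓝 (fY x₀ * ∫ u, Ψ u)) := by
    intro Ψ hΨm hΨi
    have hlim : Tendsto (fun h : ℝ => ∫ u, Ψ u * fY (x₀ - h * u)) (nhdsWithin (0:ℝ) (Ioi 0))
        (𝓝 (∫ u, Ψ u * fY x₀)) := by
      refine tendsto_integral_filter_of_dominated_convergence
        (fun u => |Ψ u| * ((1 + C) / 2)) ?_ ?_ ?_ ?_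
      · filter_upwards with h
        exact (hΨm.mul ((hfYc.comp
          (continuous_const.sub (continuous_const.mul continuous_id))).measurable)).aestronglyMeasurable
      · filter_upwards with h
        filter_upwards with u
        rw [Real.norm_eq_abs, abs_mul]
        have hb : |fY (x₀ - h * u)| ≤ (1 + C) / 2 := by
          rw [abs_of_nonneg (hfY0 _)]
          exact hM _
        exact mul_le_mul_of_nonneg_left hb (abs_nonneg _)
      · exact hΨi.abs.mul_const _
      · filter_upwards with u
        have hcont : Continuous fun h : ℝ => fY (x₀ - h * u) :=
          hfYc.comp (continuous_const.sub (continuous_id.mul continuous_const))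
        have h0 : Tendsto (fun h : ℝ => fY (x₀ - h * u)) (𝓝 0) (𝓝 (fY (x₀ - 0 * u))) :=
          hcont.tendsto 0
        simp only [zero_mul, sub_zero] at h0
        exact tendsto_const_nhds.mul (h0.mono_left nhdsWithin_le_nhds)
    have hrw : (∫ u, Ψ u * fY x₀) = fY x₀ * ∫ u, Ψ u := by
      rw [integral_mul_const]
      ring
    rw [hrw] at hlim
    exact hlim
  -- survival as an indicator integral
  have hsmeas : MeasurableSet {ω' | x₀ < gInv (X ω')} :=
    measurableSet_lt measurable_const (hgInv_meas.comp hX)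
  have hsets : {ω | t < X ω} =ᵐ[μ] {ω' | x₀ < gInv (X ω')} := by
    refine Filter.eventuallyEq_set.mpr ?_
    filter_upwards [hXΩ] with ω hω
    constructor
    · intro h1
      show x₀ < gInv (X ω)
      rw [← hg_mono.lt_iff_lt, hgx₀, hgInv_right _ hω]
      exact h1
    · intro h1
      have h2 := hg_mono (show x₀ < gInv (X ω) from h1)
      rw [hgx₀, hgInv_right _ hω] at h2
      exact h2
  have hSind : S = ∫ ω, ({ω' | x₀ < gInv (X ω')}).indicator (fun _ => (1:ℝ)) ω ∂μ := by
    rw [integral_indicator_const (1:ℝ) hsmeas, smul_eq_mul, mul_one, hSdef]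
    simp only [survival]
    congr 1
    exact measure_congr hsets
  -- the two error functions
  set β : ℝ → ℝ := fun h => ∫ u, Dfun K u * fY (x₀ - h * u) with hβdef
  set γ : ℝ → ℝ := fun h => ∫ u, kerV K u * kerW K u * fY (x₀ - h * u) with hγdef
  have hβt : Tendsto β (nhdsWithin (0:ℝ) (Ioi 0)) (𝓝 0) := by
    have h1 := hdct (Dfun K) hDmeas hDint
    rw [hD0, mul_zero] at h1
    exact h1
  have hγt : Tendsto γ (nhdsWithin (0:ℝ) (Ioi 0))
      (𝓝 (fY x₀ * ∫ u, kerV K u * kerW K u)) := by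
    have h1 := hdct (fun u => kerV K u * kerW K u) hVWmeas hVWint
    exact h1
  have hht : Tendsto (fun h : ℝ => h) (nhdsWithin (0:ℝ) (Ioi 0)) (𝓝 0) := by
    have hid : Tendsto (fun h : ℝ => h) (𝓝 (0:ℝ)) (𝓝 0) := Filter.tendsto_id
    exact hid.mono_left nhdsWithin_le_nhds
  set E : ℝ → ℝ := fun h =>
    deriv g x₀ * fX t * (∫ u, kerV K u * kerW K u) - γ h
      + β h * (1 - 2 * S - h * β h) with hEdef
  have hEt : Tendsto E (nhdsWithin (0:ℝ) (Ioi 0)) (𝓝 0) := by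
    have h1 : Tendsto (fun h : ℝ => h * β h) (nhdsWithin (0:ℝ) (Ioi 0)) (𝓝 0) := by
      have := hht.mul hβt
      simpa using this
    have h2 : Tendsto (fun h : ℝ => 1 - 2 * S - h * β h) (nhdsWithin (0:ℝ) (Ioi 0))
        (𝓝 (1 - 2 * S - 0)) := tendsto_const_nhds.sub h1
    have h3 : Tendsto (fun h : ℝ => β h * (1 - 2 * S - h * β h)) (nhdsWithin (0:ℝ) (Ioi 0))
        (𝓝 (0 * (1 - 2 * S - 0))) := hβt.mul h2
    have h4 : Tendsto E (nhdsWithin (0:ℝ) (Ioi 0))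
        (𝓝 (deriv g x₀ * fX t * (∫ u, kerV K u * kerW K u)
          - fY x₀ * (∫ u, kerV K u * kerW K u) + 0 * (1 - 2 * S - 0))) :=
      (tendsto_const_nhds.sub hγt).add h3
    have h5 : deriv g x₀ * fX t * (∫ u, kerV K u * kerW K u)
        - fY x₀ * (∫ u, kerV K u * kerW K u) + 0 * (1 - 2 * S - 0) = 0 := by
      rw [hfYx₀]; ring
    rw [h5] at h4
    exact h4
  -- the main identity, valid for every h > 0
  have hmain : ∀ᶠ h in nhdsWithin (0:ℝ) (Ioi 0),
      ((∫ ω, ((1 / h) * ∫ z in Ioi x₀, K ((z - gInv (X ω)) / h)) ^ 2 ∂μ)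
        - (∫ ω, (1 / h) * (∫ z in Ioi x₀, K ((z - gInv (X ω)) / h)) ∂μ) ^ 2
        - (S * (1 - S) - h * deriv g x₀ * fX t * ∫ y, kerV K y * kerW K y))
      = h * E h := by
    filter_upwards [self_mem_nhdsWithin] with h hh
    have hh' : (0:ℝ) < h := hh
    have hinner : ∀ y : ℝ,
        (1 / h) * (∫ z in Ioi x₀, K ((z - y) / h)) = kerV K ((x₀ - y) / h) := by
      intro y
      rw [stepI x₀ y h hh']
      rw [show kerV K ((x₀ - y) / h) = ∫ u in Ioi ((x₀ - y)/h), K u from rfl]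
      field_simp
    have hdmeas : Measurable (fun ω => (x₀ - gInv (X ω)) / h) :=
      (measurable_const.sub (hgInv_meas.comp hX)).div_const h
    have hint1 : Integrable (fun ω => kerV K ((x₀ - gInv (X ω)) / h)) μ := by
      refine Integrable.mono' (integrable_const (1:ℝ))
        ((hVcont.measurable.comp hdmeas).aestronglyMeasurable) ?_
      filter_upwards with ω
      rw [Real.norm_eq_abs, abs_of_nonneg (hV0 _)]
      exact hV1 _
    have hint2 : Integrable (fun ω => (kerV K ((x₀ - gInv (X ω)) / h)) ^ 2) μ := by
      refine Integrable.mono' (integrable_const (1:ℝ))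
        (((hVcont.measurable.comp hdmeas).pow_const 2).aestronglyMeasurable) ?_
      filter_upwards with ω
      rw [Real.norm_eq_abs, abs_of_nonneg (by positivity)]
      nlinarith [hV0 ((x₀ - gInv (X ω)) / h), hV1 ((x₀ - gInv (X ω)) / h)]
    have hintInd : Integrable
        (fun ω => ({ω' | x₀ < gInv (X ω')}).indicator (fun _ => (1:ℝ)) ω) μ :=
      (integrable_const (1:ℝ)).indicator hsmeas
    have eA : (∫ ω, ((1 / h) * ∫ z in Ioi x₀, K ((z - gInv (X ω)) / h)) ^ 2 ∂μ)
        = ∫ ω, (kerV K ((x₀ - gInv (X ω)) / h)) ^ 2 ∂μ := by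
      refine integral_congr_ae (Filter.Eventually.of_forall fun ω => ?_)
      show ((1 / h) * ∫ z in Ioi x₀, K ((z - gInv (X ω)) / h)) ^ 2
        = (kerV K ((x₀ - gInv (X ω)) / h)) ^ 2
      rw [hinner]
    have eB : (∫ ω, (1 / h) * (∫ z in Ioi x₀, K ((z - gInv (X ω)) / h)) ∂μ)
        = ∫ ω, kerV K ((x₀ - gInv (X ω)) / h) ∂μ := by
      refine integral_congr_ae (Filter.Eventually.of_forall fun ω => ?_)
      show (1 / h) * (∫ z in Ioi x₀, K ((z - gInv (X ω)) / h))
        = kerV K ((x₀ - gInv (X ω)) / h)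
      rw [hinner]
    have eBS : (∫ ω, kerV K ((x₀ - gInv (X ω)) / h) ∂μ) = S + h * β h := by
      have e1 : (∫ ω, kerV K ((x₀ - gInv (X ω)) / h) ∂μ)
          - (∫ ω, ({ω' | x₀ < gInv (X ω')}).indicator (fun _ => (1:ℝ)) ω ∂μ)
          = ∫ ω, (kerV K ((x₀ - gInv (X ω)) / h)
              - ({ω' | x₀ < gInv (X ω')}).indicator (fun _ => (1:ℝ)) ω) ∂μ :=
        (integral_sub hint1 hintInd).symm
      have e2 : ∀ ω, kerV K ((x₀ - gInv (X ω)) / h)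
          - ({ω' | x₀ < gInv (X ω')}).indicator (fun _ => (1:ℝ)) ω
          = Dfun K ((x₀ - gInv (X ω)) / h) := by
        intro ω
        rw [Dfun]
        by_cases hω : x₀ < gInv (X ω)
        · rw [indicator_of_mem (show ω ∈ {ω' | x₀ < gInv (X ω')} from hω),
            indicator_of_mem (show (x₀ - gInv (X ω)) / h ∈ Iio (0:ℝ) from
              div_neg_of_neg_of_pos (by linarith) hh')]
          try simp
        · rw [indicator_of_notMem (show ω ∉ {ω' | x₀ < gInv (X ω')} from hω),
            indicator_of_notMem (show (x₀ - gInv (X ω)) / h ∉ Iio (0:ℝ) by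
              rw [mem_Iio, not_lt]
              exact div_nonneg (by linarith [not_lt.mp hω]) (le_of_lt hh'))]
          try simp
      rw [integral_congr_ae (Filter.Eventually.of_forall e2)] at e1
      rw [key (Dfun K) hDmeas h hh'] at e1
      have e3 : h * (∫ u, Dfun K u * fY (x₀ - h * u)) = h * β h := by
        rw [hβdef]
      rw [e3] at e1
      rw [hSind]
      linarith
    have eAB : (∫ ω, (kerV K ((x₀ - gInv (X ω)) / h)) ^ 2 ∂μ)
        = (∫ ω, kerV K ((x₀ - gInv (X ω)) / h) ∂μ) - h * γ h := by
      have e1 : (∫ ω, (kerV K ((x₀ - gInv (X ω)) / h)) ^ 2 ∂μ)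
          - (∫ ω, kerV K ((x₀ - gInv (X ω)) / h) ∂μ)
          = ∫ ω, ((kerV K ((x₀ - gInv (X ω)) / h)) ^ 2
              - kerV K ((x₀ - gInv (X ω)) / h)) ∂μ :=
        (integral_sub hint2 hint1).symm
      have e2 : ∀ ω, (kerV K ((x₀ - gInv (X ω)) / h)) ^ 2
          - kerV K ((x₀ - gInv (X ω)) / h)
          = -((fun u => kerV K u * kerW K u) ((x₀ - gInv (X ω)) / h)) := by
        intro ω
        have hvw := hVW1 ((x₀ - gInv (X ω)) / h)
        show (kerV K ((x₀ - gInv (X ω)) / h)) ^ 2 - kerV K ((x₀ - gInv (X ω)) / h)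
          = -(kerV K ((x₀ - gInv (X ω)) / h) * kerW K ((x₀ - gInv (X ω)) / h))
        linear_combination kerV K ((x₀ - gInv (X ω)) / h) * hvw
      rw [integral_congr_ae (Filter.Eventually.of_forall e2), integral_neg] at e1
      rw [key (fun u => kerV K u * kerW K u) hVWmeas h hh'] at e1
      have e3 : h * (∫ u, (fun u => kerV K u * kerW K u) u * fY (x₀ - h * u)) = h * γ h := by
        rw [hγdef]
      rw [e3] at e1
      linarith
    rw [eA, eB, eAB, eBS, hEdef]
    ring
  -- conclude
  rw [Asymptotics.isLittleO_iff]
  intro ε hε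
  have hev : ∀ᶠ h in nhdsWithin (0:ℝ) (Ioi 0), |E h| < ε := by
    have := Metric.tendsto_nhds.mp hEt ε hε
    simpa [Real.dist_eq] using this
  filter_upwards [hmain, hev] with h h1 h2
  beta_reduce
  rw [h1, Real.norm_eq_abs, Real.norm_eq_abs, abs_mul]
  calc |h| * |E h| ≤ |h| * ε := mul_le_mul_of_nonneg_left (le_of_lt h2) (abs_nonneg h)
    _ = ε * |h| := mul_comm _ _
end

section
/- Fix t ∈ Ω. Under conditions C1–C6, the expectation of the second proposed survival function estimator, E[S̃_{X,2}(t)] = E[V((g⁻¹(t) − g⁻¹(X))/h)], satisfies, as h → 0⁺: E[S̃_{X,2}(t)] − S_X(t) = −(h²/2) b₁(t) ∫_{−∞}^{∞} y² K(y) dy + o(h²), where b₁(t) = g″(g⁻¹(t)) f_X(t) + (g′(g⁻¹(t)))² f_X′(t). -/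
open MeasureTheory Filter Asymptotics ENNReal

lemma integrable_of_integral_eq_one {K : ℝ → ℝ} (h : (∫ x, K x) = 1) : Integrable K := by
  by_contra hc
  rw [integral_undef hc] at h; norm_num at h

lemma integral_Ioi_eq' {f : ℝ → ℝ} (hfi : Integrable f) (c : ℝ) :
    (∫ x in Set.Ioi c, f x) =
      ((∫ x, f x) - (∫ x in Set.Iic 0, f x)) - ∫ x in (0:ℝ)..c, f x := by
  have h1 : (∫ x in Set.Iic c, f x) + (∫ x in Set.Ioi c, f x) = ∫ x, f x := by
    rw [intervalIntegral.integral_Iic_add_Ioi hfi.integrableOn hfi.integrableOn]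
  have h2 : (∫ x in Set.Iic c, f x) - (∫ x in Set.Iic 0, f x) = ∫ x in (0:ℝ)..c, f x :=
    intervalIntegral.integral_Iic_sub_Iic hfi.integrableOn hfi.integrableOn
  linarith

lemma hasDerivAt_integral_Ioi' {f : ℝ → ℝ} (hf : Continuous f) (hfi : Integrable f) (s : ℝ) :
    HasDerivAt (fun c => ∫ x in Set.Ioi c, f x) (-f s) s := by
  have h : HasDerivAt (fun c => ∫ x in (0:ℝ)..c, f x) (f s) s :=
    intervalIntegral.integral_hasDerivAt_right hfi.intervalIntegrable
      (hf.stronglyMeasurable.stronglyMeasurableAtFilter)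
      hf.continuousAt
  have heq : ∀ c, (∫ x in Set.Ioi c, f x) =
      ((∫ x, f x) - (∫ x in Set.Iic 0, f x)) - ∫ x in (0:ℝ)..c, f x :=
    integral_Ioi_eq' hfi
  simpa [heq] using (h.const_sub ((∫ x, f x) - (∫ x in Set.Iic 0, f x)))

lemma abs_le_of_deriv_bound' {e B : ℝ → ℝ} (he0 : e 0 = 0)
    (he : ∀ τ, HasDerivAt e (B τ) τ) (hBc : Continuous B)
    {A : ℝ} (hA : 0 ≤ A) {n : ℕ} (hB : ∀ τ, |B τ| ≤ A * |τ| ^ n) (s : ℝ) :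
    |e s| ≤ A * |s| ^ (n + 1) := by
  have hftc : (∫ τ in (0:ℝ)..s, B τ) = e s - e 0 :=
    intervalIntegral.integral_eq_sub_of_hasDerivAt (fun x _ => he x)
      (hBc.intervalIntegrable _ _)
  have hb : ‖∫ τ in (0:ℝ)..s, B τ‖ ≤ (A * |s| ^ n) * |s - 0| := by
    apply intervalIntegral.norm_integral_le_of_norm_le_const
    intro x hx
    have hxs : |x| ≤ |s| := by
      rcases le_total 0 s with h0 | h0
      · rw [Set.uIoc_of_le h0] at hx
        rw [abs_of_nonneg (le_of_lt hx.1), abs_of_nonneg h0]; exact hx.2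
      · rw [Set.uIoc_of_ge h0] at hx
        rw [abs_of_nonpos (hx.2), abs_of_nonpos h0]
        exact neg_le_neg (le_of_lt hx.1)
    calc ‖B x‖ ≤ A * |x| ^ n := hB x
    _ ≤ A * |s| ^ n :=
        mul_le_mul_of_nonneg_left (pow_le_pow_left₀ (abs_nonneg _) hxs n) hA
  rw [hftc, he0, sub_zero] at hb
  calc |e s| ≤ A * |s| ^ n * |s - 0| := hb
  _ = A * |s| ^ (n + 1) := by rw [sub_zero, pow_succ]; ring

lemma tail_small' {G : ℝ → ℝ} (hGi : Integrable G) (hG : ∀ x, 0 ≤ G x) {ε : ℝ} (hε : 0 < ε) :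
    ∃ M : ℝ, 0 < M ∧ ∀ M' : ℝ, M ≤ M' → (∫ u in {u : ℝ | M' < |u|}, G u) ≤ ε := by
  have hmono : Monotone (fun n : ℕ => Set.Icc (-(n:ℝ)) n) := by
    intro a b hab
    apply Set.Icc_subset_Icc (neg_le_neg (Nat.cast_le.mpr hab)) (Nat.cast_le.mpr hab)
  have hunion : (⋃ n : ℕ, Set.Icc (-(n:ℝ)) n) = Set.univ := by
    ext x; simp only [Set.mem_iUnion, Set.mem_univ, iff_true, Set.mem_Icc]
    obtain ⟨n, hn⟩ := exists_nat_ge |x|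
    obtain ⟨h1, h2⟩ := abs_le.mp hn
    exact ⟨n, by linarith, by linarith⟩
  have htend := tendsto_setIntegral_of_monotone (fun n => measurableSet_Icc) hmono
    (by rw [hunion]; exact hGi.integrableOn) (f := G)
  rw [hunion, setIntegral_univ] at htend
  obtain ⟨N, hN⟩ := (Metric.tendsto_atTop.mp htend ε hε)
  refine ⟨(N:ℝ) + 1, by positivity, fun M' hM' => ?_⟩
  have hsub : {u : ℝ | M' < |u|} ⊆ (Set.Icc (-(N:ℝ)) N)ᶜ := by
    intro x hx hmem
    rw [Set.mem_Icc] at hmem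
    have h1 : |x| ≤ N := abs_le.mpr hmem
    have h2 : M' < |x| := hx
    linarith
  have h1 : (∫ u in {u : ℝ | M' < |u|}, G u) ≤ ∫ u in (Set.Icc (-(N:ℝ)) N)ᶜ, G u := by
    apply setIntegral_mono_set hGi.integrableOn
    · filter_upwards with x using hG x
    · exact HasSubset.Subset.eventuallyLE hsub
  have h2 : (∫ u in Set.Icc (-(N:ℝ)) N, G u) + (∫ u in (Set.Icc (-(N:ℝ)) N)ᶜ, G u)
      = ∫ u, G u := integral_add_compl measurableSet_Icc hGi
  have h3 := hN N le_rfl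
  rw [Real.dist_eq, abs_sub_lt_iff] at h3
  linarith [h3.2]

set_option maxHeartbeats 1000000 in
/-- Bias expansion of the second proposed survival function estimator
`S̃_{X,2}(t)`:  as `h → 0⁺`,
`E[V((g⁻¹t − g⁻¹X)/h)] − S_X(t) = −(h²/2) b₁(t) ∫ y² K(y) dy + o(h²)`, where
`b₁(t) = g″(g⁻¹ t) f_X(t) + (g′(g⁻¹ t))² f_X′(t)`. -/
theorem bias_survival_estimator_two
    {α : Type*} [MeasurableSpace α] (μ : Measure α) [IsProbabilityMeasure μ]
    -- C1: the kernel
    (K : ℝ → ℝ) (hK_cont : Continuous K) (hK_nonneg : ∀ x, 0 ≤ K x)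
    (hK_symm : ∀ x, K (-x) = K x) (hK_one : (∫ x, K x) = 1)
    (hK_mom2 : Integrable (fun x => x ^ 2 * K x))
    -- C3, C4: the transformation
    (Ω : Set ℝ) (hΩ : Set.OrdConnected Ω)
    (g gInv fX : ℝ → ℝ)
    (hg_smooth : ContDiff ℝ 2 g) (hg_mono : StrictMono g)
    (hg_range : Set.range g = Ω)
    (hgInv_left : Function.LeftInverse gInv g)
    (hgInv_right : ∀ s ∈ Ω, g (gInv s) = s)
    (hgInv_meas : Measurable gInv)
    -- the random variable and its density
    (X : α → ℝ) (hX : Measurable X) (hXΩ : ∀ᵐ ω ∂μ, X ω ∈ Ω)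
    (hfX_smooth : ContDiff ℝ 2 fX) (hfX_nonneg : ∀ x, 0 ≤ fX x)
    (hdens : μ.map X = volume.withDensity (fun x => ENNReal.ofReal (fX x)))
    -- C4: the density f_Y(y) = g′(y) f_X(g(y)) of Y = g⁻¹(X) is twice
    -- continuously differentiable with bounded second derivative
    (hfY_smooth : ContDiff ℝ 2 (fun y => deriv g y * fX (g y)))
    (hfY_bdd : ∃ C : ℝ, ∀ y,
      |deriv (deriv (fun z => deriv g z * fX (g z))) y| ≤ C)
    -- C5
    (hgK : ∃ ε > (0 : ℝ), ∀ u : ℝ, |u| < ε →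
      Integrable (fun x => deriv g (u * x) * K x))
    (hgV : ∃ ε > (0 : ℝ), ∀ u : ℝ, |u| < ε →
      Integrable (fun x => deriv g (u * x) * kerV K x))
    -- C6: moments
    (hM1 : Integrable X μ) (hM2 : Integrable (fun ω => (X ω) ^ 2) μ)
    (hM3 : Integrable (fun ω => (X ω) ^ 3) μ)
    -- the point of evaluation
    (t : ℝ) (ht : t ∈ Ω)
    :
    (fun h : ℝ =>
        (∫ ω, kerV K ((gInv t - gInv (X ω)) / h) ∂μ)
          - survival μ X t
          + h ^ 2 / 2 *
              (deriv (deriv g) (gInv t) * fX t +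
                (deriv g (gInv t)) ^ 2 * deriv fX t) *
              ∫ y, y ^ 2 * K y)
      =o[nhdsWithin (0 : ℝ) (Set.Ioi 0)] (fun h => h ^ 2) := by
  -- notation and basic continuity facts
  set y0 := gInv t with hy0def
  have hgy0 : g y0 = t := hgInv_right t ht
  have hfX_cont : Continuous fX := hfX_smooth.continuous
  have hg_cont : Continuous g := hg_smooth.continuous
  have hKint : Integrable K := _root_.integrable_of_integral_eq_one hK_one
  set fY : ℝ → ℝ := fun y => deriv g y * fX (g y) with hfYdef
  -- basic facts about fX as a density
  have hlfX : (∫⁻ x, ENNReal.ofReal (fX x)) = 1 := by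
    have h1 : μ.map X Set.univ = 1 := by
      rw [Measure.map_apply hX MeasurableSet.univ]; simp
    rw [hdens, withDensity_apply _ MeasurableSet.univ, Measure.restrict_univ] at h1
    exact h1
  have hfXint : Integrable fX := by
    refine ⟨hfX_cont.aestronglyMeasurable, ?_⟩
    rw [hasFiniteIntegral_iff_ofReal (Eventually.of_forall hfX_nonneg), hlfX]
    norm_num
  have hintfX : (∫ x, fX x) = 1 := by
    rw [integral_eq_lintegral_of_nonneg_ae (Eventually.of_forall hfX_nonneg)
      hfX_cont.aestronglyMeasurable, hlfX]
    norm_num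
  -- the survival function in terms of the density
  have hsurv : ∀ s : ℝ, survival μ X s = ∫ x in Set.Ioi s, fX x := by
    intro s
    have h1 : μ {ω | s < X ω} = ∫⁻ x in Set.Ioi s, ENNReal.ofReal (fX x) := by
      have hpre : X ⁻¹' Set.Ioi s = {ω | s < X ω} := rfl
      rw [← hpre, ← Measure.map_apply hX measurableSet_Ioi, hdens,
        withDensity_apply _ measurableSet_Ioi]
    rw [survival, h1,
      integral_eq_lintegral_of_nonneg_ae (Eventually.of_forall hfX_nonneg)
        hfX_cont.aestronglyMeasurable]
  -- Ψ and its derivative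
  set Ψ : ℝ → ℝ := fun c => ∫ x in Set.Ioi (g c), fX x with hΨdef
  have hgdiff : ∀ y, HasDerivAt g (deriv g y) y := fun y =>
    ((hg_smooth.differentiable (by norm_num)) y).hasDerivAt
  have hΨderiv : ∀ c, HasDerivAt Ψ (-(fY c)) c := by
    intro c
    have h1 := (hasDerivAt_integral_Ioi' hfX_cont hfXint (g c)).comp c (hgdiff c)
    refine h1.congr_deriv ?_
    simp [hfYdef]; ring
  have hΨdiff : Differentiable ℝ Ψ := fun c => (hΨderiv c).differentiableAt
  have hΨcont : Continuous Ψ := hΨdiff.continuous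
  have hΨ0 : ∀ c, 0 ≤ Ψ c := fun c =>
    setIntegral_nonneg measurableSet_Ioi (fun x _ => hfX_nonneg x)
  have hΨ1 : ∀ c, Ψ c ≤ 1 := by
    intro c
    calc Ψ c ≤ ∫ x, fX x :=
      setIntegral_le_integral hfXint (Eventually.of_forall hfX_nonneg)
    _ = 1 := hintfX
  -- smoothness of fY
  have hfY1s := (contDiff_succ_iff_deriv.mp
    (show ContDiff ℝ ((1 : WithTop ℕ∞) + 1) fY from hfY_smooth)).2.2
  have hfY_diff : Differentiable ℝ fY := hfY_smooth.differentiable (by norm_num)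
  have hfY_cont : Continuous fY := hfY_diff.continuous
  have hfY1_diff : Differentiable ℝ (deriv fY) := hfY1s.differentiable (by norm_num)
  have hfY1_cont : Continuous (deriv fY) := hfY1_diff.continuous
  have hfY2_cont : Continuous (deriv (deriv fY)) := hfY1s.continuous_deriv le_rfl
  obtain ⟨C, hC⟩ := hfY_bdd
  have hC' : ∀ y, |deriv (deriv fY) y| ≤ C := hC
  have hC0 : 0 ≤ C := le_trans (abs_nonneg _) (hC' 0)
  -- chain rule helper
  have hcomp : ∀ (F F' : ℝ → ℝ), (∀ y, HasDerivAt F (F' y) y) →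
      ∀ s : ℝ, HasDerivAt (fun s => F (y0 - s)) (-(F' (y0 - s))) s := by
    intro F F' hF s
    have h := (hF (y0 - s)).comp s ((hasDerivAt_id s).const_sub y0)
    refine h.congr_deriv ?_
    ring
  -- the Taylor remainder R and its bounds
  set R : ℝ → ℝ := fun s =>
    Ψ (y0 - s) - Ψ y0 - s * fY y0 + s ^ 2 * (deriv fY y0 / 2) with hRdef
  set e2 : ℝ → ℝ := fun s => deriv fY (y0 - s) - deriv fY y0 with he2def
  set e1 : ℝ → ℝ := fun s => fY (y0 - s) - fY y0 + s * deriv fY y0 with he1def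
  have he2deriv : ∀ s, HasDerivAt e2 (-(deriv (deriv fY) (y0 - s))) s := by
    intro s
    exact (hcomp (deriv fY) (deriv (deriv fY))
      (fun y => (hfY1_diff y).hasDerivAt) s).sub_const (deriv fY y0)
  have hb2 : ∀ s, |e2 s| ≤ C * |s| ^ 1 := by
    apply abs_le_of_deriv_bound' (by simp [he2def]) he2deriv
      ((hfY2_cont.comp (continuous_const.sub continuous_id)).neg) hC0
    intro τ
    simpa using hC' (y0 - τ)
  have he1deriv : ∀ s, HasDerivAt e1 (-(e2 s)) s := by
    intro s
    have h := ((hcomp fY (deriv fY) (fun y => (hfY_diff y).hasDerivAt) s).sub_const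
      (fY y0)).add (hasDerivAt_mul_const (deriv fY y0))
    refine h.congr_deriv ?_
    simp [he2def]; ring
  have hb1 : ∀ s, |e1 s| ≤ C * |s| ^ 2 := by
    apply abs_le_of_deriv_bound' (by simp [he1def]) he1deriv
      ((hfY1_cont.comp (continuous_const.sub continuous_id)).sub
        continuous_const).neg hC0
    intro τ
    rw [abs_neg]
    exact hb2 τ
  have hRderiv : ∀ s, HasDerivAt R (e1 s) s := by
    intro s
    have h := (((hcomp Ψ (fun c => -(fY c)) (fun c => (hΨderiv c)) s).sub_const
      (Ψ y0)).sub (hasDerivAt_mul_const (fY y0))).add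
      ((hasDerivAt_pow 2 s).mul_const (deriv fY y0 / 2))
    refine h.congr_deriv ?_
    simp [he1def]; ring
  have he1cont : Continuous e1 := by
    apply Continuous.add
    · exact (hfY_cont.comp (continuous_const.sub continuous_id)).sub continuous_const
    · exact continuous_id.mul continuous_const
  have hbR : ∀ s, |R s| ≤ C * |s| ^ 3 := by
    apply abs_le_of_deriv_bound' (by simp [hRdef]) hRderiv he1cont hC0
    intro τ
    exact hb1 τ
  -- global bound on R
  have hRglob : ∀ s : ℝ, |R s| ≤ 2 + |s| * |fY y0| + s ^ 2 * (|deriv fY y0| / 2) := by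
    intro s
    have h1 : |R s| ≤ |Ψ (y0 - s) - Ψ y0 - s * fY y0| + |s ^ 2 * (deriv fY y0 / 2)| :=
      abs_add_le _ _
    have h2 : |Ψ (y0 - s) - Ψ y0 - s * fY y0| ≤ |Ψ (y0 - s) - Ψ y0| + |s * fY y0| :=
      abs_sub _ _
    have h3 : |Ψ (y0 - s) - Ψ y0| ≤ 2 := by
      have := hΨ0 (y0 - s); have := hΨ1 (y0 - s); have := hΨ0 y0; have := hΨ1 y0
      rw [abs_le]; constructor <;> linarith
    have h4 : |s * fY y0| = |s| * |fY y0| := abs_mul _ _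
    have h5 : |s ^ 2 * (deriv fY y0 / 2)| = s ^ 2 * (|deriv fY y0| / 2) := by
      rw [abs_mul, abs_pow, sq_abs, abs_div, abs_two]
    rw [h4] at h2; rw [h5] at h1
    linarith
  -- integrability of auxiliary functions
  have hI1 : ∀ h : ℝ, Integrable (fun u => K u * Ψ (y0 - h * u)) := by
    intro h
    apply Integrable.mono' hKint
    · exact (hK_cont.mul (hΨcont.comp
        (continuous_const.sub (continuous_const.mul continuous_id)))).aestronglyMeasurable
    · filter_upwards with u
      rw [Real.norm_eq_abs, abs_mul, abs_of_nonneg (hK_nonneg u)]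
      have := hΨ0 (y0 - h * u); have := hΨ1 (y0 - h * u)
      calc K u * |Ψ (y0 - h * u)| ≤ K u * 1 := by
            apply mul_le_mul_of_nonneg_left _ (hK_nonneg u)
            rw [abs_le]; constructor <;> linarith
      _ = K u := mul_one _
  have hI3 : Integrable (fun u : ℝ => u * K u) := by
    apply Integrable.mono' (hKint.add hK_mom2)
    · exact (continuous_id.mul hK_cont).aestronglyMeasurable
    · filter_upwards with u
      rw [Real.norm_eq_abs, abs_mul, abs_of_nonneg (hK_nonneg u), Pi.add_apply]
      nlinarith [sq_nonneg (|u| - 1), sq_abs u, hK_nonneg u, abs_nonneg u,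
        mul_nonneg (mul_nonneg (abs_nonneg u) (abs_nonneg u)) (hK_nonneg u)]
  have hintuK : (∫ u : ℝ, u * K u) = 0 := by
    have h : (∫ u : ℝ, -(u * K u)) = ∫ u : ℝ, u * K u := by
      have := integral_neg_eq_self (fun u : ℝ => u * K u) volume
      simpa [hK_symm] using this
    rw [integral_neg] at h
    linarith
  set μ2 : ℝ := ∫ u : ℝ, u ^ 2 * K u with hμ2def
  have hμ2nn : 0 ≤ μ2 :=
    integral_nonneg (fun u => mul_nonneg (sq_nonneg u) (hK_nonneg u))
  -- integrability and value of ∫ K u * R (h u)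
  have hdecomp : ∀ h : ℝ, (fun u => K u * R (h * u)) = fun u =>
      ((K u * Ψ (y0 - h * u) - Ψ y0 * K u) - (fY y0 * h) * (u * K u))
        + (deriv fY y0 / 2 * h ^ 2) * (u ^ 2 * K u) := by
    intro h
    funext u
    simp only [hRdef]
    ring
  have hRint : ∀ h : ℝ, Integrable (fun u => K u * R (h * u)) := by
    intro h
    rw [hdecomp h]
    exact (((hI1 h).sub (hKint.const_mul (Ψ y0))).sub
      (hI3.const_mul (fY y0 * h))).add (hK_mom2.const_mul (deriv fY y0 / 2 * h ^ 2))
  have hRval : ∀ h : ℝ, (∫ u, K u * R (h * u))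
      = (∫ u, K u * Ψ (y0 - h * u)) - Ψ y0 + deriv fY y0 / 2 * h ^ 2 * μ2 := by
    intro h
    have hB1 : Integrable (fun u : ℝ => Ψ y0 * K u) volume := hKint.const_mul (Ψ y0)
    have hB2 : Integrable (fun u : ℝ => fY y0 * h * (u * K u)) volume :=
      hI3.const_mul (fY y0 * h)
    have hB3 : Integrable (fun u : ℝ => deriv fY y0 / 2 * h ^ 2 * (u ^ 2 * K u)) volume :=
      hK_mom2.const_mul (deriv fY y0 / 2 * h ^ 2)
    have hA1 : Integrable (fun u : ℝ => K u * Ψ (y0 - h * u) - Ψ y0 * K u) volume :=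
      (hI1 h).sub hB1
    have hA2 : Integrable
        (fun u : ℝ => K u * Ψ (y0 - h * u) - Ψ y0 * K u - fY y0 * h * (u * K u)) volume :=
      hA1.sub hB2
    rw [hdecomp h, integral_add hA2 hB3, integral_sub hA1 hB2,
      integral_sub (hI1 h) hB1,
      integral_const_mul, integral_const_mul, integral_const_mul,
      hK_one, hintuK, ← hμ2def]
    ring
  -- the key Fubini identity
  have hE : ∀ h : ℝ, 0 < h → (∫ ω, kerV K ((y0 - gInv (X ω)) / h) ∂μ)
      = ∫ u, K u * Ψ (y0 - h * u) := by
    intro h hh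
    set F : α → ℝ → ℝ := fun ω u =>
      Set.indicator {u : ℝ | g (y0 - h * u) < X ω} K u with hFdef
    have hSmm : MeasurableSet {p : α × ℝ | g (y0 - h * p.2) < X p.1} := by
      apply measurableSet_lt
      · exact hg_cont.measurable.comp
          (measurable_const.sub (measurable_const.mul measurable_snd))
      · exact hX.comp measurable_fst
    have hFuncurry : Function.uncurry F =
        Set.indicator {p : α × ℝ | g (y0 - h * p.2) < X p.1} (fun p => K p.2) := by
      funext p
      simp only [Function.uncurry, hFdef, Set.indicator_apply, Set.mem_setOf_eq]
    have hFm : Measurable (Function.uncurry F) := by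
      rw [hFuncurry]
      exact (hK_cont.measurable.comp measurable_snd).indicator hSmm
    have hFnn : ∀ p : α × ℝ, 0 ≤ Function.uncurry F p := by
      intro p
      rw [hFuncurry]
      exact Set.indicator_nonneg (fun q _ => hK_nonneg q.2) p
    have hFle : ∀ p : α × ℝ, Function.uncurry F p ≤ K p.2 := by
      intro p
      rw [hFuncurry]
      exact Set.indicator_le_self' (fun q _ => hK_nonneg q.2) p
    have hFi : Integrable (Function.uncurry F) (μ.prod volume) := by
      refine ⟨hFm.aestronglyMeasurable, ?_⟩
      rw [hasFiniteIntegral_iff_ofReal (Eventually.of_forall hFnn)]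
      calc ∫⁻ p, ENNReal.ofReal (Function.uncurry F p) ∂(μ.prod volume)
          ≤ ∫⁻ p : α × ℝ, ENNReal.ofReal (K p.2) ∂(μ.prod volume) :=
            lintegral_mono fun p => ENNReal.ofReal_le_ofReal (hFle p)
        _ = ∫⁻ _ω : α, (∫⁻ u : ℝ, ENNReal.ofReal (K u)) ∂μ :=
            MeasureTheory.lintegral_prod _ ((ENNReal.measurable_ofReal.comp
              (hK_cont.measurable.comp measurable_snd)).aemeasurable)
        _ = ∫⁻ _ω : α, (1 : ℝ≥0∞) ∂μ := by
            rw [← ofReal_integral_eq_lintegral_ofReal hKint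
              (Eventually.of_forall hK_nonneg), hK_one, ENNReal.ofReal_one]
        _ = 1 := by simp
        _ < ⊤ := by norm_num
    have hswap := MeasureTheory.integral_integral_swap hFi
    have hL : (∫ ω, (∫ u, F ω u) ∂μ) = ∫ ω, kerV K ((y0 - gInv (X ω)) / h) ∂μ := by
      apply integral_congr_ae
      filter_upwards [hXΩ] with ω hω
      have hc : g (gInv (X ω)) = X ω := hgInv_right _ hω
      have hset : {u : ℝ | g (y0 - h * u) < X ω} = Set.Ioi ((y0 - gInv (X ω)) / h) := by
        ext u
        simp only [Set.mem_setOf_eq, Set.mem_Ioi]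
        constructor
        · intro h1
          rw [← hc] at h1
          have h2 := hg_mono.lt_iff_lt.mp h1
          rw [div_lt_iff₀ hh]
          nlinarith
        · intro h1
          rw [div_lt_iff₀ hh] at h1
          have h2 : y0 - h * u < gInv (X ω) := by nlinarith
          have h3 := hg_mono h2
          rwa [hc] at h3
      rw [hFdef]
      simp only [hset]
      rw [integral_indicator measurableSet_Ioi]
      rfl
    have hR2 : ∀ u : ℝ, (∫ ω, F ω u ∂μ) = K u * Ψ (y0 - h * u) := by
      intro u
      have h1 : (fun ω => F ω u)
          = Set.indicator {ω | g (y0 - h * u) < X ω} (fun _ => K u) := by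
        funext ω
        simp only [hFdef, Set.indicator_apply, Set.mem_setOf_eq]
      have hmeasω : MeasurableSet {ω | g (y0 - h * u) < X ω} := hX measurableSet_Ioi
      rw [h1, integral_indicator_const (K u) hmeasω]
      have h2 : (μ {ω | g (y0 - h * u) < X ω}).toReal = Ψ (y0 - h * u) := by
        have h3 := hsurv (g (y0 - h * u))
        rw [survival] at h3
        rw [h3, hΨdef]
      rw [smul_eq_mul, show μ.real {ω | g (y0 - h * u) < X ω} = Ψ (y0 - h * u) from h2, mul_comm]
    rw [← hL, hswap]
    apply integral_congr_ae
    filter_upwards with u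
    exact hR2 u
  -- derivative of fY at y0 in explicit form
  have hb1eq : deriv fY y0
      = deriv (deriv g) y0 * fX t + (deriv g y0) ^ 2 * deriv fX t := by
    have hgderiv_diff : Differentiable ℝ (deriv g) :=
      ((contDiff_succ_iff_deriv.mp
        (show ContDiff ℝ ((1 : WithTop ℕ∞) + 1) g from hg_smooth)).2.2).differentiable (by norm_num)
    have h1 : HasDerivAt fY (deriv (deriv g) y0 * fX (g y0)
        + deriv g y0 * (deriv fX (g y0) * deriv g y0)) y0 := by
      rw [hfYdef]
      exact ((hgderiv_diff y0).hasDerivAt).mul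
        (((hfX_smooth.differentiable (by norm_num) (g y0)).hasDerivAt).comp y0 (hgdiff y0))
    rw [h1.deriv, hgy0]
    ring
  -- reduce the goal
  rw [isLittleO_iff]
  intro ε hε
  have hδpos : 0 < ε / (2 * (C * μ2 + 1)) := by
    apply div_pos hε
    have : 0 ≤ C * μ2 := mul_nonneg hC0 hμ2nn
    linarith
  set δ : ℝ := ε / (2 * (C * μ2 + 1)) with hδdef
  set D : ℝ := 2 / δ ^ 2 + |fY y0| / δ + |deriv fY y0| / 2 with hDdef
  have hD0 : 0 ≤ D := by positivity
  have hεD : 0 < ε / (2 * (D + 1)) := by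
    apply div_pos hε; linarith
  obtain ⟨M, hM0, hMtail⟩ := tail_small' hK_mom2
    (fun u => mul_nonneg (sq_nonneg u) (hK_nonneg u)) hεD
  have hh0 : (0 : ℝ) < min 1 (δ / M) := lt_min one_pos (div_pos hδpos hM0)
  filter_upwards [Ioo_mem_nhdsGT hh0] with h hmem
  obtain ⟨hh, hhle⟩ := hmem
  have hhM : M * h < δ := by
    have h2 : h < δ / M := lt_of_lt_of_le hhle (min_le_right _ _)
    rw [lt_div_iff₀ hM0] at h2
    nlinarith
  -- rewrite the goal function at h
  have hgoal_eq : (∫ ω, kerV K ((y0 - gInv (X ω)) / h) ∂μ)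
          - survival μ X t
          + h ^ 2 / 2 *
              (deriv (deriv g) y0 * fX t +
                (deriv g y0) ^ 2 * deriv fX t) *
              (∫ y : ℝ, y ^ 2 * K y)
      = ∫ u, K u * R (h * u) := by
    rw [hE h hh, hRval h, ← hb1eq, hsurv t]
    have hΨt : Ψ y0 = ∫ x in Set.Ioi t, fX x := by rw [hΨdef]; simp [hgy0]
    rw [← hΨt, ← hμ2def]
    ring
  rw [hgoal_eq]
  -- the final estimate
  set bound : ℝ → ℝ := fun u => C * δ * h ^ 2 * (u ^ 2 * K u)
      + D * h ^ 2 * Set.indicator {u : ℝ | M < |u|} (fun u => u ^ 2 * K u) u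
    with hbounddef
  have hMmeas : MeasurableSet {u : ℝ | M < |u|} :=
    measurableSet_lt measurable_const continuous_abs.measurable
  have hbound_int : Integrable bound := by
    apply Integrable.add
    · exact hK_mom2.const_mul _
    · exact (hK_mom2.indicator hMmeas).const_mul _
  have hptwise : ∀ u : ℝ, ‖K u * R (h * u)‖ ≤ bound u := by
    intro u
    rw [Real.norm_eq_abs, abs_mul, abs_of_nonneg (hK_nonneg u)]
    have hind_nn : 0 ≤ Set.indicator {u : ℝ | M < |u|} (fun u => u ^ 2 * K u) u :=
      Set.indicator_nonneg (fun v _ => mul_nonneg (sq_nonneg v) (hK_nonneg v)) u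
    rcases le_or_gt |h * u| δ with hcase | hcase
    · -- inner region: cubic bound
      have h1 : |R (h * u)| ≤ C * |h * u| ^ 3 := hbR (h * u)
      have h2 : C * |h * u| ^ 3 ≤ C * δ * (h * u) ^ 2 := by
        have habs : |h * u| ^ 3 = (h * u) ^ 2 * |h * u| := by
          rw [pow_succ, sq_abs]
        rw [habs]
        calc C * ((h * u) ^ 2 * |h * u|) = C * (h * u) ^ 2 * |h * u| := by ring
        _ ≤ C * (h * u) ^ 2 * δ :=
            mul_le_mul_of_nonneg_left hcase (mul_nonneg hC0 (sq_nonneg (h * u)))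
        _ = C * δ * (h * u) ^ 2 := by ring
      have h3 : K u * |R (h * u)| ≤ C * δ * h ^ 2 * (u ^ 2 * K u) := by
        calc K u * |R (h * u)| ≤ K u * (C * δ * (h * u) ^ 2) :=
          mul_le_mul_of_nonneg_left (h1.trans h2) (hK_nonneg u)
        _ = C * δ * h ^ 2 * (u ^ 2 * K u) := by ring
      rw [hbounddef]
      beta_reduce
      linarith [h3, mul_nonneg (mul_nonneg hD0 (sq_nonneg h)) hind_nn]
    · -- outer region: quadratic bound via global bound
      have hMu : M < |u| := by
        have h1 : δ < h * |u| := by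
          rw [abs_mul, abs_of_pos hh] at hcase; exact hcase
        by_contra hcon
        push_neg at hcon
        have h2 : h * |u| ≤ h * M := mul_le_mul_of_nonneg_left hcon hh.le
        have h3 : h * M = M * h := mul_comm h M
        linarith
      have hind : Set.indicator {u : ℝ | M < |u|} (fun u => u ^ 2 * K u) u
          = u ^ 2 * K u :=
        Set.indicator_of_mem (show u ∈ {u : ℝ | M < |u|} from hMu) _
      have hδ2pos : (0:ℝ) < δ ^ 2 := by positivity
      have h1 : |R (h * u)| ≤ (h * u) ^ 2 * D := by
        have hg1 := hRglob (h * u)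
        have hδ2 : δ ^ 2 ≤ (h * u) ^ 2 := by
          rw [← sq_abs (h * u)]
          exact pow_le_pow_left₀ (le_of_lt hδpos) (le_of_lt hcase) 2
        have hδu : δ * |h * u| ≤ (h * u) ^ 2 := by
          rw [← sq_abs (h * u), sq]
          exact mul_le_mul_of_nonneg_right (le_of_lt hcase) (abs_nonneg _)
        have e1 : 2 ≤ (h * u) ^ 2 * (2 / δ ^ 2) := by
          rw [mul_div_assoc', le_div_iff₀ hδ2pos]
          nlinarith
        have e2 : |h * u| * |fY y0| ≤ (h * u) ^ 2 * (|fY y0| / δ) := by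
          rw [mul_div_assoc', le_div_iff₀ hδpos]
          nlinarith [abs_nonneg (fY y0)]
        rw [hDdef]
        nlinarith [sq_nonneg (h * u)]
      have h3 : K u * |R (h * u)| ≤ D * h ^ 2 * (u ^ 2 * K u) := by
        calc K u * |R (h * u)| ≤ K u * ((h * u) ^ 2 * D) :=
          mul_le_mul_of_nonneg_left h1 (hK_nonneg u)
        _ = D * h ^ 2 * (u ^ 2 * K u) := by ring
      rw [hbounddef]
      beta_reduce
      rw [hind]
      linarith [h3, mul_nonneg (mul_nonneg (mul_nonneg hC0 (le_of_lt hδpos)) (sq_nonneg h))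
        (mul_nonneg (sq_nonneg u) (hK_nonneg u))]
  have htail_nn : 0 ≤ ∫ u in {u : ℝ | M < |u|}, u ^ 2 * K u :=
    setIntegral_nonneg hMmeas (fun v _ => mul_nonneg (sq_nonneg v) (hK_nonneg v))
  have htail := hMtail M le_rfl
  calc ‖∫ u, K u * R (h * u)‖ ≤ ∫ u, ‖K u * R (h * u)‖ :=
        norm_integral_le_integral_norm _
    _ ≤ ∫ u, bound u :=
        integral_mono (hRint h).norm hbound_int hptwise
    _ = ∫ u, (C * δ * h ^ 2 * (u ^ 2 * K u)
          + D * h ^ 2 * Set.indicator {u : ℝ | M < |u|} (fun u => u ^ 2 * K u) u) := by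
        rw [hbounddef]
    _ = C * δ * h ^ 2 * μ2 + D * h ^ 2 * ∫ u in {u : ℝ | M < |u|}, u ^ 2 * K u := by
        have hBa : Integrable (fun u : ℝ => C * δ * h ^ 2 * (u ^ 2 * K u)) volume :=
          hK_mom2.const_mul _
        have hBb : Integrable (fun u : ℝ => D * h ^ 2
            * Set.indicator {u : ℝ | M < |u|} (fun u => u ^ 2 * K u) u) volume :=
          (hK_mom2.indicator hMmeas).const_mul _
        rw [integral_add hBa hBb, integral_const_mul, integral_const_mul,
          integral_indicator hMmeas, ← hμ2def]
    _ ≤ ε / 2 * h ^ 2 + ε / 2 * h ^ 2 := by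
        apply add_le_add
        · have hkey : C * δ * μ2 ≤ ε / 2 := by
            have hpos : (0:ℝ) < 2 * (C * μ2 + 1) := by
              nlinarith [mul_nonneg hC0 hμ2nn]
            have hre : C * (ε / (2 * (C * μ2 + 1))) * μ2
                = (C * μ2 * ε) / (2 * (C * μ2 + 1)) := by ring
            rw [hδdef, hre, div_le_div_iff₀ hpos (by norm_num : (0:ℝ) < 2)]
            nlinarith [hε.le, mul_nonneg hC0 hμ2nn]
          nlinarith [sq_nonneg h]
        · have hkey : D * (∫ u in {u : ℝ | M < |u|}, u ^ 2 * K u) ≤ ε / 2 := by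
            have h2 : D * (∫ u in {u : ℝ | M < |u|}, u ^ 2 * K u)
                ≤ D * (ε / (2 * (D + 1))) := mul_le_mul_of_nonneg_left htail hD0
            have h3 : D * (ε / (2 * (D + 1))) ≤ ε / 2 := by
              rw [mul_div_assoc', div_le_div_iff₀ (by linarith : (0:ℝ) < 2 * (D + 1))
                (by norm_num : (0:ℝ) < 2)]
              nlinarith [hε.le]
            linarith
          nlinarith [sq_nonneg h]
    _ = ε * ‖h ^ 2‖ := by
        rw [Real.norm_eq_abs, abs_of_nonneg (sq_nonneg h)]
        ring
end

section
/- Suppose ω′ = inf Ω is finite. For any fixed sample values X₁,…,Xₙ ∈ Ω and any bandwidth h > 0, the second proposed mean residual life estimator m̃_{X,2}(t) = 𝕊̃_{X,2}(t)/S̃_{X,2}(t) satisfies lim_{t → ω′⁺} m̃_{X,2}(t) + ω′ = X̄, where X̄ = (1/n) Σ_{i=1}^n Xᵢ is the sample mean. In particular, lim_{t → ω′⁺} S̃_{X,2}(t) = 1 and lim_{t → ω′⁺} 𝕊̃_{X,2}(t) = X̄ − ω′. -/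
open MeasureTheory Filter

/-- A monotone function has nonnegative derivative. -/
lemma monotone_deriv_nonneg' {g : ℝ → ℝ} (hg : Monotone g) (z : ℝ) : 0 ≤ deriv g z := by
  by_cases hd : DifferentiableAt ℝ g z
  · have hslope : Tendsto (slope g z) (nhdsWithin z {z}ᶜ) (nhds (deriv g z)) :=
      hasDerivAt_iff_tendsto_slope.1 hd.hasDerivAt
    refine ge_of_tendsto hslope ?_
    filter_upwards with y
    rcases le_or_gt z y with hy | hy
    · rw [slope_def_field, div_nonneg_iff]
      exact Or.inl ⟨sub_nonneg.2 (hg hy), sub_nonneg.2 hy⟩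
    · rw [slope_def_field, div_nonneg_iff]
      exact Or.inr ⟨sub_nonpos.2 (hg hy.le), sub_nonpos.2 hy.le⟩
  · rw [deriv_zero_of_not_differentiableAt hd]

/-- Boundary behaviour of the second proposed mean residual life estimator:
if `ω′ = inf Ω` is finite, then for any fixed sample `X₁, …, Xₙ ∈ Ω` and any
bandwidth `h > 0`, `lim_{t → ω′⁺} m̃_{X,2}(t) + ω′ = X̄`; in particular,
`lim_{t → ω′⁺} S̃_{X,2}(t) = 1` and `lim_{t → ω′⁺} 𝕊̃_{X,2}(t) = X̄ − ω′`. -/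
theorem mrl_estimator_two_boundary_mean_value
    (K : ℝ → ℝ) (hK_cont : Continuous K) (hK_nonneg : ∀ x, 0 ≤ K x)
    (hK_symm : ∀ x, K (-x) = K x) (hK_one : (∫ x, K x) = 1)
    (Ω : Set ℝ) (hΩ : Set.OrdConnected Ω)
    (ω' : ℝ) (hω' : IsGLB Ω ω')
    (g gInv : ℝ → ℝ)
    (hg_cont : Continuous g) (hg_mono : StrictMono g)
    (hg_range : Set.range g = Ω)
    (hgInv_left : Function.LeftInverse gInv g)
    (hgInv_right : ∀ s ∈ Ω, g (gInv s) = s)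
    -- `g⁻¹(t) → −∞` as `t → ω′⁺`
    (hgInv_tendsto : Tendsto gInv (nhdsWithin ω' (Set.Ioi ω')) atBot)
    -- `∫_{−∞}^y g′(z) dz = g(y) − ω′` for every `y`
    (hg_deriv_int : ∀ y : ℝ, (∫ z in Set.Iic y, deriv g z) = g y - ω')
    (n : ℕ) (hn : 0 < n) (Xv : Fin n → ℝ) (hXv : ∀ i, Xv i ∈ Ω)
    (h : ℝ) (hh : 0 < h) :
    Tendsto (fun t =>
        (1 / (n : ℝ)) * ∑ i, kerV K ((gInv t - gInv (Xv i)) / h))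
      (nhdsWithin ω' (Set.Ioi ω')) (nhds 1) ∧
    Tendsto (fun t =>
        (1 / (n : ℝ)) * ∑ i, ∫ z in Set.Iic (gInv (Xv i)),
          deriv g z * kerV K ((gInv t - z) / h))
      (nhdsWithin ω' (Set.Ioi ω'))
      (nhds ((1 / (n : ℝ)) * (∑ i, Xv i) - ω')) ∧
    Tendsto (fun t =>
        ((1 / (n : ℝ)) * ∑ i, ∫ z in Set.Iic (gInv (Xv i)),
            deriv g z * kerV K ((gInv t - z) / h)) /
          ((1 / (n : ℝ)) * ∑ i, kerV K ((gInv t - gInv (Xv i)) / h)) + ω')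
      (nhdsWithin ω' (Set.Ioi ω'))
      (nhds ((1 / (n : ℝ)) * ∑ i, Xv i)) := by
  -- Basic facts about `K` and `V`.
  have hK_int : Integrable K := by
    by_contra hc
    rw [integral_undef hc] at hK_one; exact one_ne_zero hK_one.symm
  have hV0 : ∀ x, 0 ≤ kerV K x := fun x =>
    setIntegral_nonneg measurableSet_Ioi (fun z _ => hK_nonneg z)
  have hV1 : ∀ x, kerV K x ≤ 1 := by
    intro x
    calc kerV K x ≤ ∫ z, K z := setIntegral_le_integral hK_int (ae_of_all _ hK_nonneg)
    _ = 1 := hK_one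
  have hVa : Antitone (kerV K) := by
    intro a b hab
    exact setIntegral_mono_set hK_int.integrableOn (ae_of_all _ hK_nonneg)
      (HasSubset.Subset.eventuallyLE (Set.Ioi_subset_Ioi hab))
  have hV_meas : Measurable (kerV K) := hVa.measurable
  -- `V → 1` at `-∞`.
  have hVt : Tendsto (kerV K) atBot (nhds 1) := by
    rw [← hK_one]
    have heq : ∀ x : ℝ, kerV K x = ∫ z, Set.indicator (Set.Ioi x) K z := by
      intro x; rw [integral_indicator measurableSet_Ioi]; rfl
    have main : Tendsto (fun x => ∫ z, Set.indicator (Set.Ioi x) K z) atBot (nhds (∫ z, K z)) := by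
      apply tendsto_integral_filter_of_dominated_convergence K
      · filter_upwards with x
        exact (hK_cont.measurable.indicator measurableSet_Ioi).aestronglyMeasurable
      · filter_upwards with x
        filter_upwards with z
        rw [Real.norm_eq_abs, abs_of_nonneg (Set.indicator_nonneg (fun z _ => hK_nonneg z) z)]
        exact Set.indicator_le_self' (fun z _ => hK_nonneg z) z
      · exact hK_int
      · filter_upwards with z
        apply Tendsto.congr' _ (tendsto_const_nhds (x := K z))
        filter_upwards [eventually_lt_atBot z] with x hx
        exact (Set.indicator_of_mem (Set.mem_Ioi.2 hx) K).symm
    exact main.congr (fun x => (heq x).symm)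
  -- `(x - c)/h → -∞` as `x → -∞`.
  have haffine : ∀ c : ℝ, Tendsto (fun x : ℝ => (x - c) / h) atBot atBot := by
    intro c
    exact (tendsto_atBot_add_const_right _ (-c) tendsto_id).atBot_div_const hh
  -- derivative of `g` is nonnegative.
  have hderiv_nonneg : ∀ z, 0 ≤ deriv g z := monotone_deriv_nonneg' hg_mono.monotone
  -- `g y > ω'` for all `y`.
  have hgy : ∀ y : ℝ, ω' < g y := by
    intro y
    have h1 : ω' ≤ g (y - 1) := hω'.1 (hg_range ▸ Set.mem_range_self (y - 1))
    exact h1.trans_lt (hg_mono (by linarith))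
  -- `deriv g` is integrable on each `Iic y`.
  have hint : ∀ y : ℝ, IntegrableOn (deriv g) (Set.Iic y) := by
    intro y
    by_contra hc
    have h1 := hg_deriv_int y
    rw [MeasureTheory.integral_undef hc] at h1
    linarith [hgy y]
  -- the key dominated convergence step for the numerator
  have key : ∀ y : ℝ, Tendsto (fun x => ∫ z in Set.Iic y, deriv g z * kerV K ((x - z) / h))
      atBot (nhds (g y - ω')) := by
    intro y
    rw [← hg_deriv_int y]
    apply tendsto_integral_filter_of_dominated_convergence (deriv g)
    · filter_upwards with x
      exact ((measurable_deriv g).mul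
        (hV_meas.comp ((measurable_const.sub measurable_id).div_const h))).aestronglyMeasurable
    · filter_upwards with x
      filter_upwards with z
      rw [Real.norm_eq_abs,
        abs_of_nonneg (mul_nonneg (hderiv_nonneg z) (hV0 _))]
      exact mul_le_of_le_one_right (hderiv_nonneg z) (hV1 _)
    · exact hint y
    · filter_upwards with z
      have : Tendsto (fun x => deriv g z * kerV K ((x - z) / h)) atBot
          (nhds (deriv g z * 1)) :=
        (hVt.comp (haffine z)).const_mul (deriv g z)
      simpa using this
  -- the three claimed limits
  have hS : Tendsto (fun t =>
      (1 / (n : ℝ)) * ∑ i, kerV K ((gInv t - gInv (Xv i)) / h))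
      (nhdsWithin ω' (Set.Ioi ω')) (nhds 1) := by
    have hsum : Tendsto (fun t => ∑ i, kerV K ((gInv t - gInv (Xv i)) / h))
        (nhdsWithin ω' (Set.Ioi ω')) (nhds (∑ _i : Fin n, (1 : ℝ))) := by
      apply tendsto_finset_sum
      intro i _
      exact (hVt.comp (haffine (gInv (Xv i)))).comp hgInv_tendsto
    have := hsum.const_mul (1 / (n : ℝ))
    have hval : (1 / (n : ℝ)) * ∑ _i : Fin n, (1 : ℝ) = 1 := by
      rw [Finset.sum_const, Finset.card_univ, Fintype.card_fin, nsmul_eq_mul, mul_one]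
      field_simp
    rw [hval] at this
    exact this
  have hSS : Tendsto (fun t =>
      (1 / (n : ℝ)) * ∑ i, ∫ z in Set.Iic (gInv (Xv i)),
        deriv g z * kerV K ((gInv t - z) / h))
      (nhdsWithin ω' (Set.Ioi ω'))
      (nhds ((1 / (n : ℝ)) * (∑ i, Xv i) - ω')) := by
    have hsum : Tendsto (fun t => ∑ i, ∫ z in Set.Iic (gInv (Xv i)),
        deriv g z * kerV K ((gInv t - z) / h))
        (nhdsWithin ω' (Set.Ioi ω')) (nhds (∑ i, (Xv i - ω'))) := by
      apply tendsto_finset_sum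
      intro i _
      have := (key (gInv (Xv i))).comp hgInv_tendsto
      rwa [hgInv_right _ (hXv i)] at this
    have := hsum.const_mul (1 / (n : ℝ))
    have hval : (1 / (n : ℝ)) * ∑ i, (Xv i - ω') = (1 / (n : ℝ)) * (∑ i, Xv i) - ω' := by
      rw [Finset.sum_sub_distrib, Finset.sum_const, Finset.card_univ, Fintype.card_fin,
        nsmul_eq_mul, mul_sub]
      have : (1 / (n : ℝ)) * ((n : ℝ) * ω') = ω' := by
        field_simp
      rw [this]
    rw [hval] at this
    exact this
  refine ⟨hS, hSS, ?_⟩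
  have := (hSS.div hS one_ne_zero).add_const ω'
  simpa using this
end
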